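/- arXiv:2304.12843 — 5 statements merged into one kernel-verified Lean document; each statement's English description precedes it below -/
import Mathlib

section
/- (Gibbard–Satterthwaite) Suppose that 𝓡_i = 𝓡 (the universal domain of all strict linear orders on X) for every agent i ∈ N. Then there is no social choice rule f : 𝓓 → X that is strategy-proof, non-dictatorial, and whose range satisfies |r(f)| ≠ 2. -/
/-- A preference is represented by its strict relation `P`, where `P a b` means
`a` is strictly preferred to `b`. -/
abbrev Pref (X : Type*) := X → X → Prop

/-- The universal domain: all strict linear orders (strict total orders) on `X`. -/
def univDomain (X : Type*) : Set (Pref X) := {P | IsStrictTotalOrder X P}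

/-- `S(𝓑)`: the set of ordered pairs of distinct alternatives that are fixed
(ranked the same way) throughout the domain `𝓑`. -/
def fixedPairs {X : Type*} (B : Set (Pref X)) : Set (X × X) :=
  {p | p.1 ≠ p.2 ∧ ∀ P ∈ B, P p.1 p.2}

/-- A preference domain is non-conditional if it consists exactly of the strict
linear orders respecting all of its fixed pairs. -/
def NonConditional {X : Type*} (B : Set (Pref X)) : Prop :=
  B = {P | P ∈ univDomain X ∧ ∀ p ∈ fixedPairs B, P p.1 p.2}

/-- `{x, y} ∈ S⁻¹(𝓑)`: the unordered pair `{x, y}` is a free pair of `𝓑`. -/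
def FreePair {X : Type*} (B : Set (Pref X)) (x y : X) : Prop :=
  x ≠ y ∧ (x, y) ∉ fixedPairs B ∧ (y, x) ∉ fixedPairs B

/-- The profile `R` lies in the product domain `∏ i, 𝓡 i`. -/
def InDomain {N X : Type*} (𝓡 : N → Set (Pref X)) (R : N → Pref X) : Prop :=
  ∀ i, R i ∈ 𝓡 i

/-- The range `r(f)` of a social choice rule `f` over the domain `𝓡`. -/
def scrRange {N X : Type*} (𝓡 : N → Set (Pref X)) (f : (N → Pref X) → X) : Set X :=
  {x | ∃ R, InDomain 𝓡 R ∧ f R = x}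

/-- Strategy-proofness of `f` on the product domain `𝓡`: no agent `i` can, at any
profile of the domain, obtain a strictly preferred outcome by misreporting. -/
def StrategyProof {N X : Type*} [DecidableEq N] (𝓡 : N → Set (Pref X))
    (f : (N → Pref X) → X) : Prop :=
  ∀ R, InDomain 𝓡 R → ∀ i, ∀ P' ∈ 𝓡 i, ¬ R i (f (Function.update R i P')) (f R)

/-- `f` is a dictatorship of agent `i` on the domain `𝓡`: at every profile of the
domain, `f` selects an outcome weakly preferred by `i` to every element of the range. -/
def Dictatorship {N X : Type*} (𝓡 : N → Set (Pref X)) (f : (N → Pref X) → X)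
    (i : N) : Prop :=
  ∀ R, InDomain 𝓡 R → ∀ x ∈ scrRange 𝓡 f, f R = x ∨ R i (f R) x

/-- `f` is non-dictatorial on the domain `𝓡`. -/
def NonDictatorial {N X : Type*} (𝓡 : N → Set (Pref X)) (f : (N → Pref X) → X) : Prop :=
  ∀ i, ¬ Dictatorship 𝓡 f i

/-- The option set `O_i(R_{-i}, 𝓑)` of agent `i` at the subprofile `R_{-i}`
relative to the set of preferences `𝓑`. -/
def optionSet {N X : Type*} [DecidableEq N] (f : (N → Pref X) → X) (i : N)
    (R : N → Pref X) (B : Set (Pref X)) : Set X :=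
  {x | ∃ P ∈ B, f (Function.update R i P) = x}

set_option linter.unusedSectionVars false
set_option linter.unusedVariables false
set_option linter.unreachableTactic false
set_option linter.unusedTactic false
set_option maxHeartbeats 1000000

open Classical
noncomputable section
namespace GS
variable {X : Type*} [Fintype X]

theorem sto_asymm {P : Pref X} (h : IsStrictTotalOrder X P) {x y : X} :
    P x y → ¬ P y x := fun h1 h2 => h.irrefl x (h.trans _ _ _ h1 h2)

/-- number of alternatives strictly better than `x` -/
def rk (P : Pref X) (x : X) : ℕ := (Finset.univ.filter (fun z => P z x)).card

theorem rk_lt_of (hP : IsStrictTotalOrder X P) {x y : X} (h : P x y) :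
    rk P x < rk P y := by
  apply Finset.card_lt_card
  constructor
  · intro z hz
    simp only [Finset.mem_filter, Finset.mem_univ, true_and] at hz ⊢
    exact hP.trans _ _ _ hz h
  · intro hsub
    have := hsub (by simp [h] : x ∈ Finset.univ.filter (fun z => P z y))
    simp only [Finset.mem_filter] at this
    exact hP.irrefl x this.2

theorem rk_lt_iff (hP : IsStrictTotalOrder X P) {x y : X} :
    P x y ↔ rk P x < rk P y := by
  constructor
  · exact rk_lt_of hP
  · intro h
    rcases (haveI := hP; trichotomous_of P x y) with h1 | h1 | h1
    · exact h1
    · subst h1; omega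
    · exact absurd (rk_lt_of hP h1) (by omega)

theorem rk_inj (hP : IsStrictTotalOrder X P) {x y : X} (h : rk P x = rk P y) : x = y := by
  rcases (haveI := hP; trichotomous_of P x y) with h1 | h1 | h1
  · exact absurd (rk_lt_of hP h1) (by omega)
  · exact h1
  · exact absurd (rk_lt_of hP h1) (by omega)

theorem rk_lt_card (hP : IsStrictTotalOrder X P) (x : X) : rk P x < Fintype.card X := by
  have : (Finset.univ.filter (fun z => P z x)) ⊆ Finset.univ.erase x := by
    intro z hz
    simp only [Finset.mem_filter, Finset.mem_univ, true_and] at hz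
    refine Finset.mem_erase.2 ⟨fun h => hP.irrefl x (h ▸ hz), Finset.mem_univ _⟩
  have := Finset.card_le_card this
  have hx : 0 < Fintype.card X := Fintype.card_pos_iff.2 ⟨x⟩
  simp only [Finset.card_erase_of_mem (Finset.mem_univ x), Finset.card_univ] at this
  unfold rk; omega

def ofScore (s : X → ℕ) : Pref X := fun x y => s x < s y

theorem ofScore_sto {s : X → ℕ} (hs : Function.Injective s) :
    IsStrictTotalOrder X (ofScore s) :=
  { trichotomous := fun x y h1 h2 => by
      rcases lt_trichotomy (s x) (s y) with h | h | h
      · exact absurd h h1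
      · exact hs h
      · exact absurd h h2
    irrefl := fun x => Nat.lt_irrefl _
    trans := fun x y z => Nat.lt_trans }

end GS

namespace GS
variable {X : Type*} [Fintype X]

/-- move `b` to the top of `P` -/
def mvTop (b : X) (P : Pref X) : Pref X :=
  ofScore (fun z => if z = b then 0 else rk P z + 1)

theorem mvTop_sto {b : X} {P : Pref X} (hP : IsStrictTotalOrder X P) :
    IsStrictTotalOrder X (mvTop b P) := by
  apply ofScore_sto
  intro x y h
  simp only at h
  split_ifs at h with h1 h2 h2
  · rw [h1, h2]
  · exact rk_inj hP (by omega)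

theorem mvTop_pair {b x y : X} {P : Pref X} (hP : IsStrictTotalOrder X P)
    (hx : x ≠ b) (hy : y ≠ b) : (mvTop b P x y ↔ P x y) := by
  simp only [mvTop, ofScore, if_neg hx, if_neg hy]
  rw [rk_lt_iff hP]; omega

theorem mvTop_top {b z : X} {P : Pref X} (hz : z ≠ b) : mvTop b P b z := by
  simp [mvTop, ofScore, if_neg hz]

/-- move `b` to the bottom of `P` -/
def mvBot (b : X) (P : Pref X) : Pref X :=
  ofScore (fun z => if z = b then Fintype.card X else rk P z)

theorem mvBot_sto {b : X} {P : Pref X} (hP : IsStrictTotalOrder X P) :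
    IsStrictTotalOrder X (mvBot b P) := by
  apply ofScore_sto
  intro x y h
  simp only at h
  split_ifs at h with h1 h2 h2
  · rw [h1, h2]
  · have := rk_lt_card hP y; omega
  · have := rk_lt_card hP x; omega
  · exact rk_inj hP h

theorem mvBot_pair {b x y : X} {P : Pref X} (hP : IsStrictTotalOrder X P)
    (hx : x ≠ b) (hy : y ≠ b) : (mvBot b P x y ↔ P x y) := by
  simp only [mvBot, ofScore, if_neg hx, if_neg hy]
  exact (rk_lt_iff hP).symm

theorem mvBot_bot {b z : X} {P : Pref X} (hP : IsStrictTotalOrder X P) (hz : z ≠ b) :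
    mvBot b P z b := by
  simp only [mvBot, ofScore, if_neg hz, if_pos rfl]
  split_ifs with hT
  · exact rk_lt_card hP z
  · exact absurd trivial hT

/-- insert `b` directly below `a` in `P` -/
def insBtw (b a : X) (P : Pref X) : Pref X :=
  ofScore (fun z => if z = b then 2 * rk P a + 1 else 2 * rk P z)

theorem insBtw_sto {b a : X} {P : Pref X} (hP : IsStrictTotalOrder X P) :
    IsStrictTotalOrder X (insBtw b a P) := by
  apply ofScore_sto
  intro x y h
  simp only at h
  split_ifs at h with h1 h2 h2
  · rw [h1, h2]
  · omega
  · omega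
  · exact rk_inj hP (by omega)

theorem insBtw_pair {b a x y : X} {P : Pref X} (hP : IsStrictTotalOrder X P)
    (hx : x ≠ b) (hy : y ≠ b) : (insBtw b a P x y ↔ P x y) := by
  simp only [insBtw, ofScore, if_neg hx, if_neg hy]
  rw [rk_lt_iff hP]; omega

theorem insBtw_below {b a : X} {P : Pref X} (ha : a ≠ b) : insBtw b a P a b := by
  simp [insBtw, ofScore, if_neg ha]

theorem insBtw_above {b a c : X} {P : Pref X} (hP : IsStrictTotalOrder X P)
    (hc : c ≠ b) (hac : P a c) : insBtw b a P b c := by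
  have := rk_lt_of hP hac
  simp only [insBtw, ofScore, if_neg hc, if_pos rfl]
  split_ifs with hT
  · omega
  · exact absurd trivial hT

/-- move `c` to directly above `a` in `P` -/
def mvAbv (c a : X) (P : Pref X) : Pref X :=
  ofScore (fun z => if z = c then 2 * rk P a else 2 * rk P z + 1)

theorem mvAbv_sto {c a : X} {P : Pref X} (hP : IsStrictTotalOrder X P) :
    IsStrictTotalOrder X (mvAbv c a P) := by
  apply ofScore_sto
  intro x y h
  simp only at h
  split_ifs at h with h1 h2 h2
  · rw [h1, h2]
  · omega
  · omega
  · exact rk_inj hP (by omega)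

theorem mvAbv_pair {c a x y : X} {P : Pref X} (hP : IsStrictTotalOrder X P)
    (hx : x ≠ c) (hy : y ≠ c) : (mvAbv c a P x y ↔ P x y) := by
  simp only [mvAbv, ofScore, if_neg hx, if_neg hy]
  rw [rk_lt_iff hP]; omega

theorem mvAbv_above {c a : X} {P : Pref X} (ha : a ≠ c) : mvAbv c a P c a := by
  simp [mvAbv, ofScore, if_neg ha]

theorem mvAbv_iff {c a z : X} {P : Pref X} (hP : IsStrictTotalOrder X P) (hz : z ≠ c) :
    (mvAbv c a P c z ↔ (rk P a ≤ rk P z)) := by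
  simp only [mvAbv, ofScore, if_neg hz, if_pos rfl]
  split_ifs with hT
  · omega
  · exact absurd trivial hT

end GS
namespace GS
variable {X : Type*} [Fintype X]
theorem mvAbv_iff' {c a z : X} {P : Pref X} (hP : IsStrictTotalOrder X P) (hz : z ≠ c) :
    (mvAbv c a P z c ↔ rk P z < rk P a) := by
  simp only [mvAbv, ofScore, if_neg hz]
  split_ifs with hT
  · omega
  · exact absurd trivial hT
end GS
namespace GS
variable {N X : Type*} [Fintype N] [DecidableEq N] [Fintype X]
variable {𝓡 : N → Set (Pref X)} {f : (N → Pref X) → X}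

/-- all coordinates are strict total orders -/
def Dom (R : N → Pref X) : Prop := ∀ i, IsStrictTotalOrder X (R i)

theorem indom (hU : ∀ i, 𝓡 i = univDomain X) {R : N → Pref X} :
    InDomain 𝓡 R ↔ Dom R := by
  unfold InDomain Dom
  constructor <;> intro h i <;> have := h i <;> rwa [hU] at * <;> exact this

theorem dom_update {R : N → Pref X} (hR : Dom R) {i : N} {P' : Pref X}
    (hP' : IsStrictTotalOrder X P') : Dom (Function.update R i P') := by
  intro j
  rcases eq_or_ne j i with h | h
  · subst h; rwa [Function.update_self]
  · rw [Function.update_of_ne h]; exact hR j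

theorem mem_range (hU : ∀ i, 𝓡 i = univDomain X) {R : N → Pref X} (hR : Dom R) :
    f R ∈ scrRange 𝓡 f := ⟨R, (indom hU).2 hR, rfl⟩

theorem switch (hU : ∀ i, 𝓡 i = univDomain X) (hsp : StrategyProof 𝓡 f)
    {R : N → Pref X} (hR : Dom R) {i : N} {P' : Pref X} (hP' : IsStrictTotalOrder X P') :
    f (Function.update R i P') = f R ∨
      (R i (f R) (f (Function.update R i P')) ∧ P' (f (Function.update R i P')) (f R)) := by
  set R' := Function.update R i P' with hR'def
  have h1 : ¬ R i (f R') (f R) := hsp R ((indom hU).2 hR) i P' (by rw [hU]; exact hP')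
  have hR'd : Dom R' := dom_update hR hP'
  have h2 : ¬ P' (f R) (f R') := by
    have h3 := hsp R' ((indom hU).2 hR'd) i (R i) (by rw [hU]; exact hR i)
    have h4 : Function.update R' i (R i) = R := by
      rw [hR'def, Function.update_idem, Function.update_eq_self]
    have h5 : R' i = P' := Function.update_self i P' R
    rwa [h4, h5] at h3
  by_cases he : f R' = f R
  · exact Or.inl he
  · refine Or.inr ⟨?_, ?_⟩
    · rcases (haveI := hR i; trichotomous_of (R i) (f R) (f R')) with h | h | h
      · exact h
      · exact absurd h.symm he
      · exact absurd h h1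
    · rcases (haveI := hP'; trichotomous_of P' (f R') (f R)) with h | h | h
      · exact h
      · exact absurd h he
      · exact absurd h h2

theorem improve (hU : ∀ i, 𝓡 i = univDomain X) (hsp : StrategyProof 𝓡 f)
    {R R' : N → Pref X} (hR : Dom R) (hR' : Dom R') {x : X}
    (him : ∀ i z, R i x z → R' i x z) (hx : f R = x) : f R' = x := by
  have key : ∀ s : Finset N, f (fun i => if i ∈ s then R' i else R i) = x := by
    intro s
    induction s using Finset.induction_on with
    | empty => simpa using hx
    | @insert i s hi ih =>
      set H : N → Pref X := fun j => if j ∈ s then R' j else R j with hH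
      have hHd : Dom H := by
        intro j; rw [hH]; dsimp only; split_ifs; exacts [hR' j, hR j]
      have heq : (fun j => if j ∈ insert i s then R' j else R j) =
          Function.update H i (R' i) := by
        funext j
        rcases eq_or_ne j i with h | h
        · subst h; rw [Function.update_self, if_pos (Finset.mem_insert_self _ _)]
        · rw [Function.update_of_ne h, hH]
          simp only [Finset.mem_insert, h, false_or]
      rw [heq]
      rcases switch hU hsp hHd (hR' i) with h | ⟨h1, h2⟩
      · rw [h]; exact ih
      · exfalso
        rw [ih] at h1 h2
        have hHi : H i = R i := by rw [hH]; dsimp only; rw [if_neg hi]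
        rw [hHi] at h1
        exact sto_asymm (hR' i) (him i _ h1) h2
  have := key Finset.univ
  simpa using this

theorem unanim (hU : ∀ i, 𝓡 i = univDomain X) (hsp : StrategyProof 𝓡 f)
    {R : N → Pref X} (hR : Dom R) {a : X} (ha : a ∈ scrRange 𝓡 f)
    (htop : ∀ i z, z ≠ a → R i a z) : f R = a := by
  obtain ⟨R0, hR0d, hR0⟩ := ha
  have hR0dom : Dom R0 := (indom hU).1 hR0d
  refine improve hU hsp hR0dom hR (fun i z h => ?_) hR0
  rcases eq_or_ne z a with he | he
  · subst he; exact absurd h ((hR0dom i).irrefl z)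
  · exact htop i z he

theorem block (hU : ∀ i, 𝓡 i = univDomain X) (hsp : StrategyProof 𝓡 f)
    {S : Set X} {u : X} (hu : u ∈ scrRange 𝓡 f) (huS : u ∈ S)
    {R : N → Pref X} (hR : Dom R)
    (hS : ∀ i, ∀ z ∈ S, ∀ w ∉ S, R i z w) : f R ∈ S := by
  classical
  set e := Fintype.equivFin X with he
  set G : N → Pref X := fun _ => ofScore (fun z => if z = u then 0 else (e z : ℕ) + 1)
    with hG
  have hGd : Dom G := by
    intro i
    apply ofScore_sto
    intro z w h
    simp only at h
    split_ifs at h with hz hw hw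
    · rw [hz, hw]
    · exact e.injective (Fin.val_injective (by omega))
  have hfG : f G = u := by
    refine unanim hU hsp hGd hu (fun i z hz => ?_)
    simp only [hG, ofScore]
    split_ifs with h1 h2 h2 <;> first | omega | exact absurd h2 hz | exact absurd rfl h1
  have key : ∀ s : Finset N, f (fun i => if i ∈ s then R i else G i) ∈ S := by
    intro s
    induction s using Finset.induction_on with
    | empty => simpa [hfG] using huS
    | @insert i s hi ih =>
      set H : N → Pref X := fun j => if j ∈ s then R j else G j with hH
      have hHd : Dom H := by
        intro j; rw [hH]; dsimp only; split_ifs; exacts [hR j, hGd j]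
      have heq : (fun j => if j ∈ insert i s then R j else G j) =
          Function.update H i (R i) := by
        funext j
        rcases eq_or_ne j i with h | h
        · subst h; rw [Function.update_self, if_pos (Finset.mem_insert_self _ _)]
        · rw [Function.update_of_ne h, hH]
          simp only [Finset.mem_insert, h, false_or]
      rw [heq]
      rcases switch hU hsp hHd (hR i) with h | ⟨h1, h2⟩
      · rw [h]; exact ih
      · by_contra hnot
        exact sto_asymm (hR i) (hS i _ ih _ hnot) h2
  have := key Finset.univ
  simpa using this

theorem pair_const (hU : ∀ i, 𝓡 i = univDomain X) (hsp : StrategyProof 𝓡 f)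
    {x y : X} (hxA : x ∈ scrRange 𝓡 f) {R R' : N → Pref X}
    (hR : Dom R) (hR' : Dom R')
    (hblkR : ∀ i, ∀ z ∈ ({x, y} : Set X), ∀ w ∉ ({x, y} : Set X), R i z w)
    (hblkR' : ∀ i, ∀ z ∈ ({x, y} : Set X), ∀ w ∉ ({x, y} : Set X), R' i z w)
    (hagree : ∀ i, R i x y ↔ R' i x y) : f R' = f R := by
  have key : ∀ s : Finset N, f (fun i => if i ∈ s then R' i else R i) = f R := by
    intro s
    induction s using Finset.induction_on with
    | empty => simp
    | @insert i s hi ih =>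
      set H : N → Pref X := fun j => if j ∈ s then R' j else R j with hH
      have hHd : Dom H := by
        intro j; rw [hH]; dsimp only; split_ifs; exacts [hR' j, hR j]
      have hHblk : ∀ j, ∀ z ∈ ({x, y} : Set X), ∀ w ∉ ({x, y} : Set X), H j z w := by
        intro j; rw [hH]; dsimp only; split_ifs; exacts [hblkR' j, hblkR j]
      have heq : (fun j => if j ∈ insert i s then R' j else R j) =
          Function.update H i (R' i) := by
        funext j
        rcases eq_or_ne j i with h | h
        · subst h; rw [Function.update_self, if_pos (Finset.mem_insert_self _ _)]
        · rw [Function.update_of_ne h, hH]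
          simp only [Finset.mem_insert, h, false_or]
      rw [heq]
      rcases switch hU hsp hHd (hR' i) with h | ⟨h1, h2⟩
      · rw [h]; exact ih
      · exfalso
        have hold : f H ∈ ({x, y} : Set X) := block hU hsp hxA (by simp) hHd hHblk
        have hnewd : Dom (Function.update H i (R' i)) := dom_update hHd (hR' i)
        have hnew : f (Function.update H i (R' i)) ∈ ({x, y} : Set X) := by
          refine block hU hsp hxA (by simp) hnewd ?_
          intro j
          rcases eq_or_ne j i with h | h
          · subst h; rw [Function.update_self]; exact hblkR' j
          · rw [Function.update_of_ne h]; exact hHblk j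
        have hne : f H ≠ f (Function.update H i (R' i)) := fun h =>
          (hHd i).irrefl _ (h ▸ h1)
        have hHiagree : H i x y ↔ R' i x y := by
          rw [hH]; dsimp only; rw [if_neg hi]; exact hagree i
        simp only [Set.mem_insert_iff, Set.mem_singleton_iff] at hold hnew
        rcases hold with h3 | h3 <;> rcases hnew with h4 | h4
        · exact hne (h3.trans h4.symm)
        · rw [h3, h4] at h1 h2
          exact sto_asymm (hR' i) (hHiagree.1 h1) h2
        · rw [h3, h4] at h1 h2
          exact sto_asymm (hHd i) h1 (hHiagree.2 h2)
        · exact hne (h3.trans h4.symm)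
  have := key Finset.univ
  simpa using this

end GS
namespace GS
variable {V α : Type*} [Fintype V] [DecidableEq V] [Fintype α]

section Arrow
variable (F : (V → Pref α) → Pref α)

/-- Extremal lemma for Arrow's theorem. -/
theorem extremal
    (hsto : ∀ R : V → Pref α, (∀ i, IsStrictTotalOrder α (R i)) → IsStrictTotalOrder α (F R))
    (hpar : ∀ R : V → Pref α, (∀ i, IsStrictTotalOrder α (R i)) →
      ∀ x y, x ≠ y → (∀ i, R i x y) → F R x y)
    (hiia : ∀ R R' : V → Pref α, (∀ i, IsStrictTotalOrder α (R i)) →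
      (∀ i, IsStrictTotalOrder α (R' i)) →
      ∀ x y, (∀ i, R i x y ↔ R' i x y) → (F R x y ↔ F R' x y))
    {R : V → Pref α} (hR : ∀ i, IsStrictTotalOrder α (R i)) {b : α}
    (hext : ∀ i, (∀ x, x ≠ b → R i b x) ∨ (∀ x, x ≠ b → R i x b)) :
    (∀ x, x ≠ b → F R b x) ∨ (∀ x, x ≠ b → F R x b) := by
  by_contra hcon
  push_neg at hcon
  obtain ⟨⟨a, hab, hnFba⟩, ⟨c, hcb, hnFbc⟩⟩ := hcon
  have hFsto := hsto R hR
  have hFab : F R a b := by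
    rcases (haveI := hFsto; trichotomous_of (F R) a b) with h | h | h
    · exact h
    · exact absurd h hab
    · exact absurd h hnFba
  have hFbc : F R b c := by
    rcases (haveI := hFsto; trichotomous_of (F R) b c) with h | h | h
    · exact h
    · exact absurd h.symm hcb
    · exact absurd h hnFbc
  have hac : a ≠ c := by
    intro h; subst h
    exact sto_asymm hFsto hFab hFbc
  set R' : V → Pref α := fun i => mvAbv c a (R i) with hR'def
  have hR' : ∀ i, IsStrictTotalOrder α (R' i) := fun i => mvAbv_sto (hR i)
  have hca : ∀ i, R' i c a := fun i => mvAbv_above hac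
  have h1 : F R' a b ↔ F R a b :=
    hiia R' R hR' hR a b (fun i => mvAbv_pair (hR i) (fun h => hac h) (fun h => hcb (h.symm ▸ rfl)))
  have h2 : ∀ i, (R' i b c ↔ R i b c) := by
    intro i
    have hbc : b ≠ c := fun h => hcb h.symm
    rcases hext i with htop | hbot
    · constructor
      · intro _; exact htop c hcb
      · intro _
        rw [hR'def]; try dsimp only
        rw [mvAbv_iff' (hR i) hbc]
        exact rk_lt_of (hR i) (htop a hab)
    · constructor
      · intro h
        exfalso
        rw [hR'def] at h; try dsimp only at h
        rw [mvAbv_iff' (hR i) hbc] at h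
        exact absurd (rk_lt_of (hR i) (hbot a hab)) (by omega)
      · intro h
        exact absurd (hbot c hcb) (sto_asymm (hR i) h)
  have hFbc' : F R' b c := (hiia R' R hR' hR b c h2).2 hFbc
  have hFab' : F R' a b := h1.2 hFab
  have hF'sto := hsto R' hR'
  have hFac' : F R' a c := hF'sto.trans _ _ _ hFab' hFbc'
  exact sto_asymm hF'sto hFac' (hpar R' hR' c a (Ne.symm hac) hca)

/-- Arrow's impossibility theorem for strict total orders. -/
theorem arrow (h3 : 3 ≤ Fintype.card α)
    (hsto : ∀ R : V → Pref α, (∀ i, IsStrictTotalOrder α (R i)) → IsStrictTotalOrder α (F R))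
    (hpar : ∀ R : V → Pref α, (∀ i, IsStrictTotalOrder α (R i)) →
      ∀ x y, x ≠ y → (∀ i, R i x y) → F R x y)
    (hiia : ∀ R R' : V → Pref α, (∀ i, IsStrictTotalOrder α (R i)) →
      (∀ i, IsStrictTotalOrder α (R' i)) →
      ∀ x y, (∀ i, R i x y ↔ R' i x y) → (F R x y ↔ F R' x y)) :
    ∃ d : V, ∀ R, (∀ i, IsStrictTotalOrder α (R i)) → ∀ x y, R d x y → F R x y := by
  classical
  have hα : 0 < Fintype.card α := by omega
  set β : Pref α := ofScore (fun z => ((Fintype.equivFin α) z : ℕ)) with hβdef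
  have hβ : IsStrictTotalOrder α β :=
    ofScore_sto (fun x y h => (Fintype.equivFin α).injective (Fin.val_injective h))
  have hPisto : ∀ (bb : α) (s : Finset V), ∀ i : V,
      IsStrictTotalOrder α ((fun i => if i ∈ s then mvTop bb β else mvBot bb β) i) := by
    intro bb s i
    dsimp only
    split_ifs
    · exact mvTop_sto hβ
    · exact mvBot_sto hβ
  -- Step 1: existence of a pivotal voter for bb
  have hpiv : ∀ bb : α, ∃ (d : V) (s : Finset V), d ∉ s ∧
      (∀ x, x ≠ bb → F (fun i => if i ∈ s then mvTop bb β else mvBot bb β) x bb) ∧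
      (∀ x, x ≠ bb → F (fun i => if i ∈ insert d s then mvTop bb β else mvBot bb β) bb x) := by
    intro bb
    set n := Fintype.card V with hn
    set eV := Fintype.equivFin V with heV
    set Sk : ℕ → Finset V := fun k => Finset.univ.filter (fun i => (eV i : ℕ) < k) with hSk
    set Pi9 : Finset V → (V → Pref α) :=
      fun s i => if i ∈ s then mvTop bb β else mvBot bb β with hPi9
    have hbot0 : ∀ x, x ≠ bb → F (Pi9 (Sk 0)) x bb := by
      intro x hx
      refine hpar _ (hPisto bb _) x bb hx (fun i => ?_)
      have hni : i ∉ Sk 0 := by simp [hSk]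
      show (if i ∈ Sk 0 then mvTop bb β else mvBot bb β) x bb
      rw [if_neg hni]
      exact mvBot_bot hβ hx
    have htopn : ∀ x, x ≠ bb → F (Pi9 (Sk n)) bb x := by
      intro x hx
      refine hpar _ (hPisto bb _) bb x (Ne.symm hx) (fun i => ?_)
      have hni : i ∈ Sk n := by
        simp only [hSk, Finset.mem_filter, Finset.mem_univ, true_and]
        exact lt_of_lt_of_le (eV i).isLt (le_of_eq hn.symm)
      show (if i ∈ Sk n then mvTop bb β else mvBot bb β) bb x
      rw [if_pos hni]
      exact mvTop_top hx
    have hextr : ∀ k, (∀ x, x ≠ bb → F (Pi9 (Sk k)) bb x) ∨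
        (∀ x, x ≠ bb → F (Pi9 (Sk k)) x bb) := by
      intro k
      refine extremal F hsto hpar hiia (hPisto bb _) (fun i => ?_)
      rcases Classical.em (i ∈ Sk k) with hmem | hmem
      · refine Or.inl (fun x hx => ?_)
        show (if i ∈ Sk k then mvTop bb β else mvBot bb β) bb x
        rw [if_pos hmem]; exact mvTop_top hx
      · refine Or.inr (fun x hx => ?_)
        show (if i ∈ Sk k then mvTop bb β else mvBot bb β) x bb
        rw [if_neg hmem]; exact mvBot_bot hβ hx
    have hex : ∃ k, (∀ x, x ≠ bb → F (Pi9 (Sk k)) bb x) := ⟨n, htopn⟩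
    set r := Nat.find hex with hr
    have hrspec : ∀ x, x ≠ bb → F (Pi9 (Sk r)) bb x := Nat.find_spec hex
    have hrn : r ≤ n := Nat.find_le htopn
    have hr0 : r ≠ 0 := by
      intro h
      obtain ⟨x, hx⟩ := Fintype.exists_ne_of_one_lt_card (by omega) bb
      rw [h] at hrspec
      exact sto_asymm (hsto _ (hPisto bb _)) (hrspec x hx) (hbot0 x hx)
    have hlt : r - 1 < n := by omega
    have hbotr : ∀ x, x ≠ bb → F (Pi9 (Sk (r - 1))) x bb := by
      have hmin : ¬ (∀ x, x ≠ bb → F (Pi9 (Sk (r-1))) bb x) := Nat.find_min hex (by omega)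
      rcases hextr (r - 1) with h | h
      · exact absurd h hmin
      · exact h
    refine ⟨eV.symm ⟨r - 1, hlt⟩, Sk (r - 1), ?_, hbotr, ?_⟩
    · have hv : (eV (eV.symm ⟨r - 1, hlt⟩) : ℕ) = r - 1 := by
        rw [Equiv.apply_symm_apply]
      simp only [hSk, Finset.mem_filter, Finset.mem_univ, true_and, hv]
      omega
    · have hins : insert (eV.symm ⟨r - 1, hlt⟩) (Sk (r - 1)) = Sk r := by
        ext i
        simp only [Finset.mem_insert, hSk, Finset.mem_filter, Finset.mem_univ, true_and]
        constructor
        · rintro (h | h)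
          · rw [h, Equiv.apply_symm_apply]
            show r - 1 < r
            omega
          · omega
        · intro h
          rcases Nat.lt_or_ge (eV i : ℕ) (r - 1) with h' | h'
          · exact Or.inr h'
          · left
            have h1 : (eV i : ℕ) = r - 1 := by omega
            have h2 : eV i = ⟨r - 1, hlt⟩ := Fin.ext h1
            rw [← h2, Equiv.symm_apply_apply]
      rw [hins]
      exact hrspec
  -- Step 2/3: the pivotal voter for bb dictates all pairs not involving bb
  have step3 : ∀ (bb : α) (d : V) (s : Finset V), d ∉ s →
      (∀ x, x ≠ bb → F (fun i => if i ∈ s then mvTop bb β else mvBot bb β) x bb) →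
      (∀ x, x ≠ bb → F (fun i => if i ∈ insert d s then mvTop bb β else mvBot bb β) bb x) →
      ∀ R, (∀ i, IsStrictTotalOrder α (R i)) →
      ∀ a c, a ≠ bb → c ≠ bb → R d a c → F R a c := by
    intro bb d s hd hbot htop R hR a c hab hcb hRac
    have hac : a ≠ c := fun h => (hR d).irrefl a (h ▸ hRac)
    set R' : V → Pref α := fun i =>
      if i ∈ s then mvTop bb (R i) else if i = d then insBtw bb a (R i) else mvBot bb (R i)
      with hR'def
    have hR' : ∀ i, IsStrictTotalOrder α (R' i) := by
      intro i
      show IsStrictTotalOrder α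
        (if i ∈ s then mvTop bb (R i) else if i = d then insBtw bb a (R i) else mvBot bb (R i))
      split_ifs
      · exact mvTop_sto (hR i)
      · exact insBtw_sto (hR i)
      · exact mvBot_sto (hR i)
    have hFab : F R' a bb := by
      rw [hiia R' _ hR' (hPisto bb s) a bb ?_]
      · exact hbot a hab
      · intro i
        show (if i ∈ s then mvTop bb (R i) else if i = d then insBtw bb a (R i)
              else mvBot bb (R i)) a bb
            ↔ (if i ∈ s then mvTop bb β else mvBot bb β) a bb
        rcases Classical.em (i ∈ s) with h1 | h1
        · rw [if_pos h1, if_pos h1]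
          exact iff_of_false (sto_asymm (mvTop_sto (hR i)) (mvTop_top hab))
            (sto_asymm (mvTop_sto hβ) (mvTop_top hab))
        · rw [if_neg h1, if_neg h1]
          rcases Classical.em (i = d) with h2 | h2
          · rw [if_pos h2]
            exact iff_of_true (insBtw_below hab) (mvBot_bot hβ hab)
          · rw [if_neg h2]
            exact iff_of_true (mvBot_bot (hR i) hab) (mvBot_bot hβ hab)
    have hFbc : F R' bb c := by
      rw [hiia R' _ hR' (hPisto bb (insert d s)) bb c ?_]
      · exact htop c hcb
      · intro i
        show (if i ∈ s then mvTop bb (R i) else if i = d then insBtw bb a (R i)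
              else mvBot bb (R i)) bb c
            ↔ (if i ∈ insert d s then mvTop bb β else mvBot bb β) bb c
        rcases Classical.em (i ∈ s) with h1 | h1
        · rw [if_pos h1, if_pos (Finset.mem_insert_of_mem h1)]
          exact iff_of_true (mvTop_top hcb) (mvTop_top hcb)
        · rw [if_neg h1]
          rcases Classical.em (i = d) with h2 | h2
          · subst h2
            rw [if_pos rfl, if_pos (Finset.mem_insert_self i s)]
            exact iff_of_true (insBtw_above (hR i) hcb hRac) (mvTop_top hcb)
          · rw [if_neg h2, if_neg (by
              simp only [Finset.mem_insert]
              push_neg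
              exact ⟨h2, h1⟩)]
            exact iff_of_false (sto_asymm (mvBot_sto (hR i)) (mvBot_bot (hR i) hcb))
              (sto_asymm (mvBot_sto hβ) (mvBot_bot hβ hcb))
    have hFac : F R' a c := (hsto R' hR').trans _ _ _ hFab hFbc
    rw [← hiia R' R hR' hR a c ?_]
    · exact hFac
    · intro i
      show (if i ∈ s then mvTop bb (R i) else if i = d then insBtw bb a (R i)
            else mvBot bb (R i)) a c ↔ R i a c
      rcases Classical.em (i ∈ s) with h1 | h1
      · rw [if_pos h1]; exact mvTop_pair (hR i) hab hcb
      · rw [if_neg h1]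
        rcases Classical.em (i = d) with h2 | h2
        · rw [if_pos h2]; exact insBtw_pair (hR i) hab hcb
        · rw [if_neg h2]; exact mvBot_pair (hR i) hab hcb
  -- assemble the dictator
  have hnea : Nonempty α := Fintype.card_pos_iff.1 hα
  obtain ⟨b⟩ := hnea
  obtain ⟨d, s, hd, hbot, htop⟩ := hpiv b
  have hthird : ∀ x y : α, ∃ c : α, c ≠ x ∧ c ≠ y := by
    intro x y
    by_contra h
    push_neg at h
    have hsub : (Finset.univ : Finset α) ⊆ {x, y} := by
      intro c _
      simp only [Finset.mem_insert, Finset.mem_singleton]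
      rcases Classical.em (c = x) with h2 | h2
      · exact Or.inl h2
      · exact Or.inr (h c h2)
    have hcard := Finset.card_le_card hsub
    have h2 : ({x, y} : Finset α).card ≤ 2 := by
      refine le_trans (Finset.card_insert_le x {y}) ?_
      simp
    simp only [Finset.card_univ] at hcard
    omega
  -- any pivotal voter (for any other alternative) equals d
  have huniq : ∀ (cc : α) (d' : V) (s' : Finset V), d' ∉ s' →
      (∀ x, x ≠ cc → F (fun i => if i ∈ s' then mvTop cc β else mvBot cc β) x cc) →
      (∀ x, x ≠ cc → F (fun i => if i ∈ insert d' s' then mvTop cc β else mvBot cc β) cc x) →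
      cc ≠ b → d' = d := by
    intro cc d' s' hd' hbot' htop' hccb
    by_contra hne'
    obtain ⟨x0, hx0b, hx0c⟩ := hthird b cc
    rcases Classical.em (d' ∈ s) with hmem | hmem
    · have h1 : F (fun i => if i ∈ s then mvTop b β else mvBot b β) b x0 := by
        refine step3 cc d' s' hd' hbot' htop' _ (hPisto b s) b x0 (Ne.symm hccb) hx0c ?_
        show (if d' ∈ s then mvTop b β else mvBot b β) b x0
        rw [if_pos hmem]
        exact mvTop_top hx0b
      exact sto_asymm (hsto _ (hPisto b s)) h1 (hbot x0 hx0b)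
    · have hmem2 : d' ∉ insert d s := by
        simp only [Finset.mem_insert]
        push_neg
        exact ⟨hne', hmem⟩
      have h1 : F (fun i => if i ∈ insert d s then mvTop b β else mvBot b β) x0 b := by
        refine step3 cc d' s' hd' hbot' htop' _ (hPisto b (insert d s)) x0 b hx0c (Ne.symm hccb) ?_
        show (if d' ∈ insert d s then mvTop b β else mvBot b β) x0 b
        rw [if_neg hmem2]
        exact mvBot_bot hβ hx0b
      exact sto_asymm (hsto _ (hPisto b (insert d s))) h1 (htop x0 hx0b)
  refine ⟨d, fun R hR x y hRxy => ?_⟩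
  rcases Classical.em (x ≠ b ∧ y ≠ b) with ⟨hxb, hyb⟩ | hcase
  · exact step3 b d s hd hbot htop R hR x y hxb hyb hRxy
  · obtain ⟨cc, hcx, hcy⟩ := hthird x y
    have hccb : cc ≠ b := by
      intro h
      subst h
      rcases Classical.em (x = cc) with h1 | h1
      · exact hcx h1.symm
      · rcases Classical.em (y = cc) with h2 | h2
        · exact hcy h2.symm
        · exact hcase ⟨h1, h2⟩
    obtain ⟨d', s', hd', hbot', htop'⟩ := hpiv cc
    have hdd : d' = d := huniq cc d' s' hd' hbot' htop' hccb
    subst hdd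
    exact step3 cc d' s' hd' hbot' htop' R hR x y (Ne.symm hcx) (Ne.symm hcy) hRxy
end Arrow
end GS
namespace GS
section BlockTop
variable {X : Type*} [Fintype X]

/-- move the set `S` to the top of `P`, preserving internal order -/
def blockTop (S : Set X) (P : Pref X) : Pref X :=
  ofScore (fun z => if z ∈ S then rk P z else Fintype.card X + rk P z)

theorem blockTop_sto {S : Set X} {P : Pref X} (hP : IsStrictTotalOrder X P) :
    IsStrictTotalOrder X (blockTop S P) := by
  apply ofScore_sto
  intro x y h
  simp only at h
  split_ifs at h with h1 h2 h2
  · exact rk_inj hP h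
  · have := rk_lt_card hP x; omega
  · have := rk_lt_card hP y; omega
  · exact rk_inj hP (by omega)

theorem blockTop_iff {S : Set X} {P : Pref X} (hP : IsStrictTotalOrder X P) {z w : X}
    (hzw : z ∈ S ↔ w ∈ S) : blockTop S P z w ↔ P z w := by
  simp only [blockTop, ofScore]
  rcases Classical.em (z ∈ S) with h | h
  · rw [if_pos h, if_pos (hzw.1 h), ← rk_lt_iff hP]
  · rw [if_neg h, if_neg (fun hw => h (hzw.2 hw)), rk_lt_iff hP]
    omega

theorem blockTop_block {S : Set X} {P : Pref X} (hP : IsStrictTotalOrder X P) {z w : X}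
    (hz : z ∈ S) (hw : w ∉ S) : blockTop S P z w := by
  simp only [blockTop, ofScore]
  rw [if_pos hz, if_neg hw]
  have := rk_lt_card hP z
  omega

theorem blockTop_mono {S T : Set X} {P : Pref X} (hP : IsStrictTotalOrder X P) {x : X}
    (hx : x ∈ S) (hST : S ⊆ T) (w : X) (h : blockTop T P x w) : blockTop S P x w := by
  rcases Classical.em (w ∈ S) with hw | hw
  · rw [blockTop_iff hP (iff_of_true hx hw)]
    rw [blockTop_iff hP (iff_of_true (hST hx) (hST hw))] at h
    exact h
  · exact blockTop_block hP hx hw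
end BlockTop

section Main
variable {N X : Type*} [Fintype N] [DecidableEq N] [Fintype X]
variable {𝓡 : N → Set (Pref X)} {f : (N → Pref X) → X}

/-- The Gibbard–Satterthwaite theorem: a strategy-proof rule on the universal
domain whose range has at least three elements is dictatorial. -/
theorem gs_main (hU : ∀ i, 𝓡 i = univDomain X) (hsp : StrategyProof 𝓡 f)
    (h3 : 3 ≤ (scrRange 𝓡 f).ncard) : ∃ d, Dictatorship 𝓡 f d := by
  classical
  set A : Set X := scrRange 𝓡 f with hA
  haveI : Fintype ↥A := Fintype.ofFinite _
  have hcardA : Fintype.card ↥A = A.ncard := by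
    rw [← Nat.card_eq_fintype_card, Nat.card_coe_set_eq]
  have hcard3 : 3 ≤ Fintype.card ↥A := by rw [hcardA]; exact h3
  -- extension of a profile on A to a profile on X
  set Ext : (N → Pref ↥A) → N → Pref X := fun Q i => ofScore (fun z =>
    if h : z ∈ A then rk (Q i) (⟨z, h⟩ : ↥A) else
      Fintype.card ↥A + ((Fintype.equivFin X) z : ℕ)) with hExt
  have hExtd : ∀ Q : N → Pref ↥A, (∀ i, IsStrictTotalOrder ↥A (Q i)) →
      ∀ i, IsStrictTotalOrder X (Ext Q i) := by
    intro Q hQ i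
    apply ofScore_sto
    intro z w h
    simp only at h
    split_ifs at h with h1 h2 h2
    · exact congrArg Subtype.val (rk_inj (hQ i) h)
    · have := rk_lt_card (hQ i) (⟨z, h1⟩ : ↥A); omega
    · have := rk_lt_card (hQ i) (⟨w, h2⟩ : ↥A); omega
    · exact (Fintype.equivFin X).injective (Fin.val_injective (by omega))
  have hExtA : ∀ (Q : N → Pref ↥A), (∀ i, IsStrictTotalOrder ↥A (Q i)) →
      ∀ i (a b : ↥A), (Ext Q i ↑a ↑b ↔ Q i a b) := by
    intro Q hQ i a b
    simp only [hExt, ofScore]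
    rw [dif_pos a.2, dif_pos b.2]
    have ha : (⟨↑a, a.2⟩ : ↥A) = a := rfl
    have hb : (⟨↑b, b.2⟩ : ↥A) = b := rfl
    rw [ha, hb, ← rk_lt_iff (hQ i)]
  -- the induced social welfare function on A
  set F : (N → Pref ↥A) → Pref ↥A := fun Q a b =>
    a ≠ b ∧ f (fun i => blockTop {↑a, ↑b} (Ext Q i)) = ↑a with hF
  have hPTd : ∀ (Q : N → Pref ↥A), (∀ i, IsStrictTotalOrder ↥A (Q i)) → ∀ (S : Set X),
      Dom (fun i => blockTop S (Ext Q i)) :=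
    fun Q hQ S i => blockTop_sto (hExtd Q hQ i)
  have hcomm : ∀ (Q : N → Pref ↥A) (a b : ↥A),
      (fun i => blockTop {(↑a : X), ↑b} (Ext Q i)) =
      (fun i => blockTop {(↑b : X), ↑a} (Ext Q i)) := by
    intro Q a b
    funext i
    rw [Set.pair_comm]
  have hblk : ∀ (Q : N → Pref ↥A) (_ : ∀ i, IsStrictTotalOrder ↥A (Q i)) (a b : ↥A),
      f (fun i => blockTop {↑a, ↑b} (Ext Q i)) ∈ ({↑a, ↑b} : Set X) := by
    intro Q hQ a b
    refine block hU hsp (a.2 : (↑a : X) ∈ scrRange 𝓡 f) (by simp) (hPTd Q hQ _) ?_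
    intro i z hz w hw
    exact blockTop_block (hExtd Q hQ i) hz hw
  -- F is a strict total order
  have hFsto : ∀ Q, (∀ i, IsStrictTotalOrder ↥A (Q i)) → IsStrictTotalOrder ↥A (F Q) := by
    intro Q hQ
    have htri : ∀ a b : ↥A, F Q a b ∨ a = b ∨ F Q b a := by
      intro a b
      rcases Classical.em (a = b) with h | h
      · exact Or.inr (Or.inl h)
      · have h1 := hblk Q hQ a b
        simp only [Set.mem_insert_iff, Set.mem_singleton_iff] at h1
        rcases h1 with h1 | h1
        · exact Or.inl ⟨h, h1⟩
        · refine Or.inr (Or.inr ⟨Ne.symm h, ?_⟩)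
          rw [hcomm Q b a]
          exact h1
    have hproj : ∀ a b c : ↥A, a ≠ b → a ≠ c → b ≠ c →
        f (fun i => blockTop {↑a, ↑b, ↑c} (Ext Q i)) = ↑a → F Q a b ∧ F Q a c := by
      intro a b c hab hac hbc htr
      have himp : ∀ (y : ↥A), (({(↑a : X), ↑y} : Set X) ⊆ {↑a, ↑b, ↑c}) →
          f (fun i => blockTop {(↑a : X), ↑y} (Ext Q i)) = ↑a := by
        intro y hsub
        refine improve hU hsp (hPTd Q hQ _) (hPTd Q hQ _) (fun i z hz => ?_) htr
        exact blockTop_mono (hExtd Q hQ i) (by simp) hsub z hz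
      refine ⟨⟨hab, himp b ?_⟩, ⟨hac, himp c ?_⟩⟩
      · intro z hz
        simp only [Set.mem_insert_iff, Set.mem_singleton_iff] at hz ⊢
        tauto
      · intro z hz
        simp only [Set.mem_insert_iff, Set.mem_singleton_iff] at hz ⊢
        tauto
    refine { trichotomous := fun a b h1 h2 => (htri a b).elim (fun h => absurd h h1) (fun h => h.elim id (fun h => absurd h h2)), irrefl := fun a h => h.1 rfl, trans := ?_ }
    rintro a b c ⟨hab, hfab⟩ ⟨hbc, hfbc⟩
    have hac : a ≠ c := by
      intro h
      subst h
      rw [hcomm Q b a, hfab] at hfbc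
      exact hab (Subtype.val_injective hfbc)
    refine ⟨hac, ?_⟩
    have hw := block hU hsp (a.2 : (↑a : X) ∈ scrRange 𝓡 f) (by simp)
      (hPTd Q hQ {↑a, ↑b, ↑c}) (fun i z hz w hw => blockTop_block (hExtd Q hQ i) hz hw)
    simp only [Set.mem_insert_iff, Set.mem_singleton_iff] at hw
    rcases hw with h | h | h
    · exact ((hproj a b c hab hac hbc h).2).2
    · exfalso
      have hset : ({(↑a : X), ↑b, ↑c} : Set X) = {↑b, ↑a, ↑c} := by
        ext z
        simp only [Set.mem_insert_iff, Set.mem_singleton_iff]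
        tauto
      rw [hset] at h
      have h2 : (f fun i => blockTop {(↑b : X), ↑a} (Ext Q i)) = ↑b :=
        ((hproj b a c (Ne.symm hab) hbc hac h).1).2
      rw [hcomm Q b a] at h2
      exact hab (Subtype.val_injective (hfab.symm.trans h2))
    · exfalso
      have hset : ({(↑a : X), ↑b, ↑c} : Set X) = {↑c, ↑a, ↑b} := by
        ext z
        simp only [Set.mem_insert_iff, Set.mem_singleton_iff]
        tauto
      rw [hset] at h
      have h2 : (f fun i => blockTop {(↑c : X), ↑b} (Ext Q i)) = ↑c :=
        ((hproj c a b (Ne.symm hac) (Ne.symm hbc) hab h).2).2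
      rw [hcomm Q c b] at h2
      exact hbc (Subtype.val_injective (hfbc.symm.trans h2))
  -- Pareto
  have hFpar : ∀ Q, (∀ i, IsStrictTotalOrder ↥A (Q i)) →
      ∀ a b : ↥A, a ≠ b → (∀ i, Q i a b) → F Q a b := by
    intro Q hQ a b hab hall
    refine ⟨hab, unanim hU hsp (hPTd Q hQ _) a.2 (fun i z hz => ?_)⟩
    rcases Classical.em (z = (↑b : X)) with h | h
    · subst h
      rw [blockTop_iff (hExtd Q hQ i) (iff_of_true (by simp) (by simp))]
      exact (hExtA Q hQ i a b).2 (hall i)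
    · exact blockTop_block (hExtd Q hQ i) (by simp) (by simp [hz, h])
  -- IIA
  have hFiia : ∀ Q Q', (∀ i, IsStrictTotalOrder ↥A (Q i)) →
      (∀ i, IsStrictTotalOrder ↥A (Q' i)) →
      ∀ a b : ↥A, (∀ i, Q i a b ↔ Q' i a b) → (F Q a b ↔ F Q' a b) := by
    intro Q Q' hQ hQ' a b hagree
    have heq : f (fun i => blockTop {(↑a : X), ↑b} (Ext Q' i)) =
        f (fun i => blockTop {(↑a : X), ↑b} (Ext Q i)) := by
      refine pair_const hU hsp a.2 (hPTd Q hQ _) (hPTd Q' hQ' _)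
        (fun i z hz w hw => blockTop_block (hExtd Q hQ i) hz hw)
        (fun i z hz w hw => blockTop_block (hExtd Q' hQ' i) hz hw) (fun i => ?_)
      rw [blockTop_iff (hExtd Q hQ i) (iff_of_true (by simp) (by simp)),
        blockTop_iff (hExtd Q' hQ' i) (iff_of_true (by simp) (by simp)),
        hExtA Q hQ i a b, hExtA Q' hQ' i a b]
      exact hagree i
    simp only [hF, heq]
  obtain ⟨d, hdict⟩ := arrow F hcard3 hFsto hFpar hFiia
  -- d is a dictator for f
  refine ⟨d, fun R hRdom x hx => ?_⟩
  have hR : Dom R := (indom hU).1 hRdom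
  set Q : N → Pref ↥A := fun i a b => R i ↑a ↑b with hQdef
  have hQ : ∀ i, IsStrictTotalOrder ↥A (Q i) := by
    intro i
    have htr : ∀ a b : ↥A, Q i a b ∨ a = b ∨ Q i b a := by
      intro a b
      rcases (haveI := hR i; trichotomous_of (R i) a.1 b.1) with h | h | h
      · exact Or.inl h
      · exact Or.inr (Or.inl (Subtype.val_injective h))
      · exact Or.inr (Or.inr h)
    exact { trichotomous := fun a b h1 h2 => (htr a b).elim (fun h => absurd h h1) (fun h => h.elim id (fun h => absurd h h2))
            irrefl := fun a => (hR i).irrefl a.1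
            trans := fun a b c h1 h2 => (hR i).trans _ _ _ h1 h2 }
  have hfRA : f R ∈ A := mem_range hU hR
  have hAne : (A.toFinset).Nonempty := ⟨f R, Set.mem_toFinset.2 hfRA⟩
  obtain ⟨m, hmF, hmin⟩ := Finset.exists_min_image A.toFinset (fun z => rk (R d) z) hAne
  have hmA : m ∈ A := Set.mem_toFinset.1 hmF
  have hmax : ∀ z ∈ A, z ≠ m → R d m z := by
    intro z hz hne
    have h1 := hmin z (Set.mem_toFinset.2 hz)
    have h2 : rk (R d) m ≠ rk (R d) z := fun h => hne (rk_inj (hR d) h).symm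
    rw [rk_lt_iff (hR d)]
    omega
  have hfRm : f R = m := by
    by_contra hne
    have hQdm : Q d ⟨m, hmA⟩ ⟨f R, hfRA⟩ := hmax (f R) hfRA hne
    have hFd := hdict Q hQ ⟨m, hmA⟩ ⟨f R, hfRA⟩ hQdm
    have hfm : f (fun i => blockTop {m, f R} (Ext Q i)) = m := hFd.2
    have hfy : f (fun i => blockTop {m, f R} (Ext Q i)) = f R := by
      refine improve hU hsp hR (hPTd Q hQ _) (fun i z hz => ?_) rfl
      rcases Classical.em (z = m) with h | h
      · subst h
        rw [blockTop_iff (hExtd Q hQ i) (iff_of_true (by simp) (by simp))]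
        exact (hExtA Q hQ i ⟨f R, hfRA⟩ ⟨z, hmA⟩).2 hz
      · rcases Classical.em (z = f R) with h2 | h2
        · subst h2
          exact absurd hz ((hR i).irrefl _)
        · exact blockTop_block (hExtd Q hQ i) (by simp) (by simp [h, h2])
    exact hne (hfy.symm.trans hfm)
  rcases Classical.em (f R = x) with h | h
  · exact Or.inl h
  · refine Or.inr ?_
    rw [hfRm]
    exact hmax x hx (fun hh => h (hfRm.trans hh.symm))
end Main
end GS

theorem statement1 {N X : Type*} [Fintype N] [Nonempty N] [Fintype X] [DecidableEq N]
    (𝓡 : N → Set (Pref X)) (hU : ∀ i, 𝓡 i = univDomain X) :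
    ¬ ∃ f : (N → Pref X) → X,
        StrategyProof 𝓡 f ∧ NonDictatorial 𝓡 f ∧ (scrRange 𝓡 f).ncard ≠ 2 := by
  rintro ⟨f, hsp, hnd, hcard⟩
  rcases isEmpty_or_nonempty X with hXe | hXne
  · exact (hXe.false (f (fun _ _ _ => True))).elim
  classical
  have hβ : IsStrictTotalOrder X (GS.ofScore (fun z => ((Fintype.equivFin X) z : ℕ))) :=
    GS.ofScore_sto (fun x y h => (Fintype.equivFin X).injective (Fin.val_injective h))
  have hdomc : GS.Dom (fun _ : N => GS.ofScore (fun z => ((Fintype.equivFin X) z : ℕ))) :=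
    fun _ => hβ
  have hfA : f (fun _ => GS.ofScore (fun z => ((Fintype.equivFin X) z : ℕ))) ∈ scrRange 𝓡 f :=
    GS.mem_range hU hdomc
  have hAne : (scrRange 𝓡 f).Nonempty := ⟨_, hfA⟩
  have h1 : 0 < (scrRange 𝓡 f).ncard := (Set.ncard_pos (Set.toFinite _)).2 hAne
  rcases Classical.em ((scrRange 𝓡 f).ncard = 1) with h2 | h2
  · obtain ⟨a, ha⟩ := Set.ncard_eq_one.1 h2
    have i0 : N := Classical.arbitrary N
    apply hnd i0
    intro R hRdom x hxA
    left
    have h3 : f R ∈ scrRange 𝓡 f := ⟨R, hRdom, rfl⟩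
    rw [ha] at h3 hxA
    exact h3.trans hxA.symm
  · have h3 : 3 ≤ (scrRange 𝓡 f).ncard := by omega
    obtain ⟨d, hdict⟩ := GS.gs_main hU hsp h3
    exact hnd d hdict
end
end

section
/- If a social choice rule f : 𝓓 → X is strategy-proof, then for every agent i ∈ N, every subprofile R_{-i} ∈ ∏_{j≠i} 𝓡_j, and all distinct alternatives x, y ∈ O_i(R_{-i}, 𝓡_i), the unordered pair {x, y} belongs to S^{-1}(𝓡_i), i.e., it is a free pair of 𝓡_i. -/
theorem statement4 {N X : Type*} [Fintype N] [Nonempty N] [Fintype X] [DecidableEq N]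
    (𝓡 : N → Set (Pref X)) (hsub : ∀ i, 𝓡 i ⊆ univDomain X)
    (f : (N → Pref X) → X) (hSP : StrategyProof 𝓡 f) :
    ∀ i : N, ∀ R : N → Pref X, (∀ j, j ≠ i → R j ∈ 𝓡 j) →
      ∀ x ∈ optionSet f i R (𝓡 i), ∀ y ∈ optionSet f i R (𝓡 i),
        x ≠ y → FreePair (𝓡 i) x y := by
  intro i R hR x hx y hy hxy
  have key : ∀ a b : X, a ∈ optionSet f i R (𝓡 i) → b ∈ optionSet f i R (𝓡 i) →
      a ≠ b → (a, b) ∉ fixedPairs (𝓡 i) := by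
    intro a b ha hb hab hfix
    obtain ⟨Pa, hPa, hfa⟩ := ha
    obtain ⟨Pb, hPb, hfb⟩ := hb
    have hdom : InDomain 𝓡 (Function.update R i Pb) := by
      intro j
      by_cases hj : j = i
      · subst hj; simpa using hPb
      · rw [Function.update_of_ne hj]; exact hR j hj
    have := hSP _ hdom i Pa hPa
    rw [Function.update_idem, hfa, Function.update_self, hfb] at this
    exact this (hfix.2 Pb hPb)
  exact ⟨hxy, key x y hx hy hxy, key y x hy hx (Ne.symm hxy)⟩
end

section
/- Under the induction setup, let f be a social choice rule on 𝓓 that is strategy-proof, non-dictatorial, and with |r(f)| ≠ 2, and let f' be its restriction to 𝓓'. If |r(f')| ≥ 2, then f' is not a dictatorship of any agent (neither of agent i nor of any agent j ≠ i). -/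
namespace S9

variable {N X : Type*}

lemma sto_asymm {P : Pref X} (h : IsStrictTotalOrder X P) {a b : X} (h1 : P a b) : ¬ P b a :=
  fun h2 => h.irrefl a (h.trans a b a h1 h2)

lemma sto_tri {P : Pref X} (h : IsStrictTotalOrder X P) (a b : X) :
    P a b ∨ a = b ∨ P b a := by
  by_cases h1 : P a b
  · exact Or.inl h1
  · by_cases h2 : P b a
    · exact Or.inr (Or.inr h2)
    · exact Or.inr (Or.inl (h.trichotomous a b h1 h2))

lemma tri_of {P : Pref X} (h : ∀ a b, P a b ∨ a = b ∨ P b a) :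
    ∀ a b, ¬ P a b → ¬ P b a → a = b := by
  intro a b h1 h2
  rcases h a b with h3 | h3 | h3
  · exact absurd h3 h1
  · exact h3
  · exact absurd h3 h2

lemma sto_cases {P : Pref X} (h : IsStrictTotalOrder X P) {a b : X} (hne : a ≠ b)
    (hn : ¬ P a b) : P b a := by
  rcases sto_tri h a b with h1 | h1 | h1
  · exact absurd h1 hn
  · exact absurd h1 hne
  · exact h1

lemma nc_mem {B : Set (Pref X)} (hB : NonConditional B) {P : Pref X}
    (h1 : IsStrictTotalOrder X P) (h2 : ∀ p ∈ fixedPairs B, P p.1 p.2) : P ∈ B := by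
  rw [hB]; exact ⟨h1, h2⟩

lemma nc_sto {B : Set (Pref X)} (hB : NonConditional B) {P : Pref X} (hP : P ∈ B) :
    IsStrictTotalOrder X P := by
  rw [hB] at hP; exact hP.1

lemma nc_resp {B : Set (Pref X)} (hB : NonConditional B) {P : Pref X} (hP : P ∈ B) :
    ∀ p ∈ fixedPairs B, P p.1 p.2 := by
  rw [hB] at hP; exact hP.2

lemma fp_rel {B : Set (Pref X)} {a b : X} (h : (a, b) ∈ fixedPairs B) {P : Pref X}
    (hP : P ∈ B) : P a b := h.2 P hP

lemma fp_ne {B : Set (Pref X)} {a b : X} (h : (a, b) ∈ fixedPairs B) : a ≠ b := h.1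

lemma fp_trans {B : Set (Pref X)} (hB : NonConditional B) (hne : B.Nonempty) {a b c : X}
    (h1 : (a, b) ∈ fixedPairs B) (h2 : (b, c) ∈ fixedPairs B) : (a, c) ∈ fixedPairs B := by
  obtain ⟨P0, hP0⟩ := hne
  have hsto := nc_sto hB hP0
  refine ⟨?_, fun P hP => (nc_sto hB hP).trans _ _ _ (h1.2 P hP) (h2.2 P hP)⟩
  intro hac
  have e1 : P0 a b := h1.2 P0 hP0
  have e2 : P0 b c := h2.2 P0 hP0
  rw [show c = a from hac.symm] at e2
  exact sto_asymm hsto e1 e2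

lemma fp_asymm {B : Set (Pref X)} (hB : NonConditional B) (hne : B.Nonempty) {a b : X}
    (h1 : (a, b) ∈ fixedPairs B) (h2 : (b, a) ∈ fixedPairs B) : False := by
  obtain ⟨P0, hP0⟩ := hne
  exact sto_asymm (nc_sto hB hP0) (h1.2 P0 hP0) (h2.2 P0 hP0)

/-- Every strict partial order extends to a strict total order. -/
lemma exists_ext (s : X → X → Prop) (hirr : ∀ a, ¬ s a a)
    (htr : ∀ a b c, s a b → s b c → s a c) :
    ∃ W : Pref X, IsStrictTotalOrder X W ∧ ∀ a b, s a b → W a b := by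
  have hpo : IsPartialOrder X (fun a b => s a b ∨ a = b) := by
    refine { refl := fun a => Or.inr rfl, trans := ?_, antisymm := ?_ }
    · rintro a b c (hab | rfl) (hbc | rfl)
      · exact Or.inl (htr _ _ _ hab hbc)
      · exact Or.inl hab
      · exact Or.inl hbc
      · exact Or.inr rfl
    · rintro a b (hab | rfl) hba
      · rcases hba with hba | rfl
        · exact absurd (htr _ _ _ hab hba) (hirr a)
        · rfl
      · rfl
  obtain ⟨ℓ, hℓ, hsub⟩ := @extend_partialOrder X _ hpo
  have htot : ∀ a b, ℓ a b ∨ ℓ b a := hℓ.toTotal.total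
  have hanti : ∀ a b, ℓ a b → ℓ b a → a = b := fun a b =>
    hℓ.toIsPartialOrder.toAntisymm.antisymm a b
  have htrℓ : ∀ a b c, ℓ a b → ℓ b c → ℓ a c := fun a b c =>
    hℓ.toIsPartialOrder.toIsPreorder.toIsTrans.trans a b c
  refine ⟨fun a b => ℓ a b ∧ a ≠ b, ?_, fun a b hab =>
    ⟨hsub a b (Or.inl hab), fun h => hirr a (h ▸ hab)⟩⟩
  refine { trichotomous := tri_of ?_, irrefl := fun a h => h.2 rfl, trans := ?_ }
  · intro a b
    by_cases hab : a = b
    · exact Or.inr (Or.inl hab)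
    · rcases htot a b with h | h
      · exact Or.inl ⟨h, hab⟩
      · exact Or.inr (Or.inr ⟨h, Ne.symm hab⟩)
  · rintro a b c ⟨h1, hne1⟩ ⟨h2, hne2⟩
    refine ⟨htrℓ _ _ _ h1 h2, fun he => hne1 ?_⟩
    exact hanti _ _ h1 (he ▸ h2)

/-- Two-star extension lemma: a strict partial order extends to a strict total
order putting `m₁` above everything in `A₁` and `m₂` above everything in `A₂`. -/
lemma star2 (s : X → X → Prop) (hirr : ∀ a, ¬ s a a)
    (htr : ∀ a b c, s a b → s b c → s a c)
    (m₁ m₂ : X) (A₁ A₂ : Set X)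
    (H1 : ∀ d, (d ∈ A₁ ∨ d ∈ A₂) → d ≠ m₁ ∧ ¬ s d m₁)
    (H2 : ∀ d ∈ A₂, d ≠ m₂ ∧ ¬ s d m₂) :
    ∃ W : Pref X, IsStrictTotalOrder X W ∧ (∀ a b, s a b → W a b) ∧
      (∀ d ∈ A₁, W m₁ d) ∧ (∀ d ∈ A₂, W m₂ d) := by
  let Dn1 : X → Prop := fun v => ∃ d, d ∈ A₁ ∧ (d = v ∨ s d v)
  let Dn2 : X → Prop := fun v => ∃ d, d ∈ A₂ ∧ (d = v ∨ s d v)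
  let U : X → X → Prop := fun u v =>
    s u v ∨ ((u = m₁ ∨ s u m₁) ∧ (Dn1 v ∨ Dn2 v)) ∨ ((u = m₂ ∨ s u m₂) ∧ Dn2 v)
  have hDn1W : ∀ v w, Dn1 v → s v w → Dn1 w := by
    rintro v w ⟨d, hd, rfl | hdv⟩ hvw
    · exact ⟨d, hd, Or.inr hvw⟩
    · exact ⟨d, hd, Or.inr (htr _ _ _ hdv hvw)⟩
  have hDn2W : ∀ v w, Dn2 v → s v w → Dn2 w := by
    rintro v w ⟨d, hd, rfl | hdv⟩ hvw
    · exact ⟨d, hd, Or.inr hvw⟩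
    · exact ⟨d, hd, Or.inr (htr _ _ _ hdv hvw)⟩
  have hkey1 : ∀ v, (Dn1 v ∨ Dn2 v) → (v = m₁ ∨ s v m₁) → False := by
    intro v hv hvm
    obtain ⟨d, hd, hdv⟩ : ∃ d, (d ∈ A₁ ∨ d ∈ A₂) ∧ (d = v ∨ s d v) := by
      rcases hv with ⟨d, hd, h⟩ | ⟨d, hd, h⟩
      exacts [⟨d, Or.inl hd, h⟩, ⟨d, Or.inr hd, h⟩]
    obtain ⟨hne, hns⟩ := H1 d hd
    rcases hdv with rfl | hdv
    · rcases hvm with rfl | h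
      · exact hne rfl
      · exact hns h
    · rcases hvm with rfl | h
      · exact hns hdv
      · exact hns (htr _ _ _ hdv h)
  have hkey2 : ∀ v, Dn2 v → (v = m₂ ∨ s v m₂) → False := by
    rintro v ⟨d, hd, hdv⟩ hvm
    obtain ⟨hne, hns⟩ := H2 d hd
    rcases hdv with rfl | hdv
    · rcases hvm with rfl | h
      · exact hne rfl
      · exact hns h
    · rcases hvm with rfl | h
      · exact hns hdv
      · exact hns (htr _ _ _ hdv h)
  have hUtr : ∀ a b c, U a b → U b c → U a c := by
    intro a b c hab hbc
    rcases hab with hab | ⟨ham, hb⟩ | ⟨ham, hb⟩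
    · rcases hbc with hbc | ⟨hbm, hc⟩ | ⟨hbm, hc⟩
      · exact Or.inl (htr _ _ _ hab hbc)
      · refine Or.inr (Or.inl ⟨?_, hc⟩)
        rcases hbm with rfl | h
        exacts [Or.inr hab, Or.inr (htr _ _ _ hab h)]
      · refine Or.inr (Or.inr ⟨?_, hc⟩)
        rcases hbm with rfl | h
        exacts [Or.inr hab, Or.inr (htr _ _ _ hab h)]
    · rcases hbc with hbc | ⟨hbm, hc⟩ | ⟨hbm, hc⟩
      · exact Or.inr (Or.inl ⟨ham, (by
          rcases hb with hb | hb
          exacts [Or.inl (hDn1W _ _ hb hbc), Or.inr (hDn2W _ _ hb hbc)])⟩)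
      · exact absurd hbm (hkey1 b hb)
      · exact Or.inr (Or.inl ⟨ham, Or.inr hc⟩)
    · rcases hbc with hbc | ⟨hbm, hc⟩ | ⟨hbm, hc⟩
      · exact Or.inr (Or.inr ⟨ham, hDn2W _ _ hb hbc⟩)
      · exact absurd hbm (hkey1 b (Or.inr hb))
      · exact absurd hbm (hkey2 b hb)
  have hUirr : ∀ a, ¬ U a a := by
    rintro a (h | ⟨ham, ha⟩ | ⟨ham, ha⟩)
    · exact hirr a h
    · exact hkey1 a ha ham
    · exact hkey2 a ha ham
  obtain ⟨W, hWsto, hWsub⟩ := exists_ext U hUirr hUtr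
  refine ⟨W, hWsto, fun a b hab => hWsub a b (Or.inl hab), ?_, ?_⟩
  · exact fun d hd => hWsub _ _ (Or.inr (Or.inl ⟨Or.inl rfl, Or.inl ⟨d, hd, Or.inl rfl⟩⟩))
  · exact fun d hd => hWsub _ _ (Or.inr (Or.inr ⟨Or.inl rfl, ⟨d, hd, Or.inl rfl⟩⟩))

/-- Two-star extension within a nonempty non-conditional domain. -/
lemma nc_star2 {B : Set (Pref X)} (hB : NonConditional B) (hne : B.Nonempty)
    (m₁ m₂ : X) (A₁ A₂ : Set X)
    (H1 : ∀ d, (d ∈ A₁ ∨ d ∈ A₂) → d ≠ m₁ ∧ (d, m₁) ∉ fixedPairs B)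
    (H2 : ∀ d ∈ A₂, d ≠ m₂ ∧ (d, m₂) ∉ fixedPairs B) :
    ∃ W ∈ B, (∀ d ∈ A₁, W m₁ d) ∧ (∀ d ∈ A₂, W m₂ d) := by
  obtain ⟨W, hsto, hsub, h1, h2⟩ := star2 (fun a b => (a, b) ∈ fixedPairs B)
    (fun a ha => ha.1 rfl) (fun a b c h1 h2 => fp_trans hB hne h1 h2) m₁ m₂ A₁ A₂ H1 H2
  exact ⟨W, nc_mem hB hsto (fun p hp => hsub p.1 p.2 hp), h1, h2⟩

end S9

namespace S9

variable {N X : Type*} [DecidableEq N]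

lemma indomain_update {𝓡 : N → Set (Pref X)} {R : N → Pref X} (hR : InDomain 𝓡 R)
    {k : N} {P : Pref X} (hP : P ∈ 𝓡 k) : InDomain 𝓡 (Function.update R k P) := by
  intro j
  by_cases hj : j = k
  · subst hj; rw [Function.update_self]; exact hP
  · rw [Function.update_of_ne hj]; exact hR j

lemma optionSet_congr {f : (N → Pref X) → X} {k : N} {B : Set (Pref X)}
    {R R' : N → Pref X} (h : ∀ j, j ≠ k → R j = R' j) :
    optionSet f k R B = optionSet f k R' B := by
  have hupd : ∀ P : Pref X, Function.update R k P = Function.update R' k P := by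
    intro P; funext j
    by_cases hj : j = k
    · subst hj; rw [Function.update_self, Function.update_self]
    · rw [Function.update_of_ne hj, Function.update_of_ne hj]; exact h j hj
  simp only [optionSet, hupd]

lemma self_mem_optionSet (f : (N → Pref X) → X) (k : N) (R : N → Pref X)
    {B : Set (Pref X)} (h : R k ∈ B) : f R ∈ optionSet f k R B :=
  ⟨R k, h, by rw [Function.update_eq_self]⟩

/-- Strategy-proofness implies that the outcome is the agent's maximum over their
option set. -/
lemma lemA {𝓡 : N → Set (Pref X)} {f : (N → Pref X) → X} (hSP : StrategyProof 𝓡 f)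
    (hNC : ∀ j, NonConditional (𝓡 j)) {R : N → Pref X} (hR : InDomain 𝓡 R) (k : N)
    {c : X} (hc : c ∈ optionSet f k R (𝓡 k)) : c = f R ∨ R k (f R) c := by
  obtain ⟨P', hP', hfc⟩ := hc
  have hsto := nc_sto (hNC k) (hR k)
  have hnsp := hSP R hR k P' hP'
  rw [hfc] at hnsp
  rcases sto_tri hsto c (f R) with h | h | h
  · exact absurd h hnsp
  · exact Or.inl h
  · exact Or.inr h

/-- The companion order of `P`: move `x` to the position just above `y`. -/
def Qc (P : Pref X) (x y : X) : Pref X := fun u v =>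
  (u = x ∧ v ≠ x ∧ (P y v ∨ v = y)) ∨ (u ≠ x ∧ v = x ∧ P u y) ∨ (u ≠ x ∧ v ≠ x ∧ P u v)

lemma Qc_sto {P : Pref X} {x y : X} (hP : IsStrictTotalOrder X P) (hyx : P y x) :
    IsStrictTotalOrder X (Qc P x y) := by
  have hxy : ¬ P x y := sto_asymm hP hyx
  refine { trichotomous := tri_of ?_, irrefl := ?_, trans := ?_ }
  · intro a b
    by_cases hab : a = b
    · exact Or.inr (Or.inl hab)
    · by_cases hax : a = x
      · by_cases hbx : b = x
        · exact absurd (hax.trans hbx.symm) hab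
        · rcases sto_tri hP y b with h | h | h
          · exact Or.inl (Or.inl ⟨hax, hbx, Or.inl h⟩)
          · exact Or.inl (Or.inl ⟨hax, hbx, Or.inr h.symm⟩)
          · exact Or.inr (Or.inr (Or.inr (Or.inl ⟨hbx, hax, h⟩)))
      · by_cases hbx : b = x
        · rcases sto_tri hP y a with h | h | h
          · exact Or.inr (Or.inr (Or.inl ⟨hbx, hax, Or.inl h⟩))
          · exact Or.inr (Or.inr (Or.inl ⟨hbx, hax, Or.inr h.symm⟩))
          · exact Or.inl (Or.inr (Or.inl ⟨hax, hbx, h⟩))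
        · rcases sto_tri hP a b with h | h | h
          · exact Or.inl (Or.inr (Or.inr ⟨hax, hbx, h⟩))
          · exact Or.inr (Or.inl h)
          · exact Or.inr (Or.inr (Or.inr (Or.inr ⟨hbx, hax, h⟩)))
  · rintro a (⟨h1, h2, _⟩ | ⟨h1, h2, _⟩ | ⟨_, _, h3⟩)
    · exact h2 h1
    · exact h1 h2
    · exact hP.irrefl a h3
  · rintro a b c (⟨hax, hbx, hyb⟩ | ⟨hax, hbx, hay⟩ | ⟨hax, hbx, hab⟩)
      (⟨hbx', hcx, hyc⟩ | ⟨hbx', hcx, hby⟩ | ⟨hbx', hcx, hbc⟩)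
    · exact absurd hbx' hbx
    · exfalso
      rcases hyb with h | rfl
      · exact sto_asymm hP h hby
      · exact hP.irrefl b hby
    · refine Or.inl ⟨hax, hcx, ?_⟩
      rcases hyb with h | rfl
      · exact Or.inl (hP.trans _ _ _ h hbc)
      · exact Or.inl hbc
    · refine Or.inr (Or.inr ⟨hax, hcx, ?_⟩)
      rcases hyc with h | rfl
      · exact hP.trans _ _ _ hay h
      · exact hay
    · exact absurd hbx hbx'
    · exact absurd hbx hbx'
    · exact absurd hbx' hbx
    · exact Or.inr (Or.inl ⟨hax, hcx, hP.trans _ _ _ hab hby⟩)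
    · exact Or.inr (Or.inr ⟨hax, hcx, hP.trans _ _ _ hab hbc⟩)

end S9

namespace S9

variable {N X : Type*} [DecidableEq N]

/-- Membership of the companion order in the restricted domain. -/
lemma Qc_mem {𝓡i 𝓡i' : Set (Pref X)} (hNCi : NonConditional 𝓡i) (hNC' : NonConditional 𝓡i')
    (hD'ne : 𝓡i'.Nonempty) {x y : X} (hxy : (x, y) ∈ fixedPairs 𝓡i')
    (hS : fixedPairs 𝓡i = fixedPairs 𝓡i' \ {(x, y)})
    {P : Pref X} (hP : P ∈ 𝓡i) (hyx : P y x) : Qc P x y ∈ 𝓡i' := by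
  have hPsto := nc_sto hNCi hP
  refine nc_mem hNC' (Qc_sto hPsto hyx) ?_
  rintro ⟨u, v⟩ hp
  by_cases hpe : (u, v) = ((x : X), (y : X))
  · rw [Prod.mk.injEq] at hpe
    obtain ⟨rfl, rfl⟩ := hpe
    exact Or.inl ⟨rfl, fun h => (fp_ne hxy) h.symm, Or.inr rfl⟩
  · have hpS : ((u, v) : X × X) ∈ fixedPairs 𝓡i := by
      rw [hS]; exact ⟨hp, hpe⟩
    have hPuv : P u v := fp_rel hpS hP
    have huv : u ≠ v := fp_ne hpS
    by_cases hux : u = x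
    · have hvx : v ≠ x := fun h => huv (hux.trans h.symm)
      have hPxv : P x v := hux ▸ hPuv
      exact Or.inl ⟨hux, hvx, Or.inl (hPsto.trans _ _ _ hyx hPxv)⟩
    · by_cases hvx : v = x
      · subst hvx
        have huy : ((u, y) : X × X) ∈ fixedPairs 𝓡i := by
          rw [hS]
          refine ⟨fp_trans hNC' hD'ne (by rw [hS] at hpS; exact hpS.1) hxy, ?_⟩
          simp only [Set.mem_singleton_iff, Prod.mk.injEq, not_and]
          intro h; exact absurd h hux
        exact Or.inr (Or.inl ⟨hux, rfl, fp_rel huy hP⟩)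
      · exact Or.inr (Or.inr ⟨hux, hvx, hPuv⟩)

/-- The companion dichotomy: deviating from `P` (with `y` over `x`) to its companion
either leaves the outcome unchanged, or the companion outcome is `x` and the original
outcome lies (weakly) between `y` and `x`. -/
lemma companion {i : N} {𝓡 𝓡' : N → Set (Pref X)}
    (hAgree : ∀ j, j ≠ i → 𝓡' j = 𝓡 j) (hNC : ∀ j, NonConditional (𝓡 j))
    (hNC' : NonConditional (𝓡' i)) (hD'ne : (𝓡' i).Nonempty) {x y : X}
    (hxy : (x, y) ∈ fixedPairs (𝓡' i))
    (hS : fixedPairs (𝓡 i) = fixedPairs (𝓡' i) \ {(x, y)})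
    {f : (N → Pref X) → X} (hSP : StrategyProof 𝓡 f)
    {R : N → Pref X} (hR : InDomain 𝓡 R) (hyx : R i y x) :
    f R = f (Function.update R i (Qc (R i) x y)) ∨
      (f (Function.update R i (Qc (R i) x y)) = x ∧ (R i y (f R) ∨ f R = y) ∧ R i (f R) x) := by
  have hsubD : 𝓡' i ⊆ 𝓡 i := by
    intro P hP
    refine nc_mem (hNC i) (nc_sto hNC' hP) ?_
    intro p hp
    refine nc_resp hNC' hP p ?_
    rw [hS] at hp; exact hp.1
  have hQ' : Qc (R i) x y ∈ 𝓡' i := Qc_mem (hNC i) hNC' hD'ne hxy hS (hR i) hyx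
  have hQ : Qc (R i) x y ∈ 𝓡 i := hsubD hQ'
  have hPsto := nc_sto (hNC i) (hR i)
  have hQsto := Qc_sto hPsto hyx
  have hSP1 : ¬ R i (f (Function.update R i (Qc (R i) x y))) (f R) := hSP R hR i _ hQ
  have hR2 : InDomain 𝓡 (Function.update R i (Qc (R i) x y)) := indomain_update hR hQ
  have hSP2 : ¬ Qc (R i) x y (f R) (f (Function.update R i (Qc (R i) x y))) := by
    have := hSP (Function.update R i (Qc (R i) x y)) hR2 i (R i) (hR i)
    rwa [Function.update_idem, Function.update_eq_self, Function.update_self] at this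
  set a := f R with ha
  set b := f (Function.update R i (Qc (R i) x y)) with hb
  by_cases hab : a = b
  · exact Or.inl hab
  · have hPab : R i a b := by
      rcases sto_tri hPsto a b with h | h | h
      · exact h
      · exact absurd h hab
      · exact absurd h hSP1
    have hQba : Qc (R i) x y b a := by
      rcases sto_tri hQsto a b with h | h | h
      · exact absurd h hSP2
      · exact absurd h hab
      · exact h
    rcases hQba with ⟨hbx, hax, hya⟩ | ⟨hbx, hax, hby⟩ | ⟨hbx, hax, hba⟩
    · exact Or.inr ⟨hbx, (by rcases hya with h | h; exacts [Or.inl h, Or.inr h]),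
        (by rw [← hbx]; exact hPab)⟩
    · exfalso
      have : R i x b := hax ▸ hPab
      exact sto_asymm hPsto hyx (hPsto.trans _ _ _ this hby)
    · exact absurd hPab (sto_asymm hPsto hba)

end S9

namespace S9

/-- If the restriction of `f` is a dictatorship of some agent `h ≠ i`, we get a
contradiction. -/
lemma caseNe {N X : Type*} [Fintype X] [DecidableEq N]
    (i h : N) (hhi : h ≠ i) (𝓡 𝓡' : N → Set (Pref X))
    (hAgree : ∀ j, j ≠ i → 𝓡' j = 𝓡 j)
    (hNC : ∀ j, NonConditional (𝓡 j)) (hNC' : NonConditional (𝓡' i))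
    (x y : X) (hxy : (x, y) ∈ fixedPairs (𝓡' i))
    (hS : fixedPairs (𝓡 i) = fixedPairs (𝓡' i) \ {(x, y)})
    (f : (N → Pref X) → X) (hSP : StrategyProof 𝓡 f)
    (hND : NonDictatorial 𝓡 f) (hcard : (scrRange 𝓡 f).ncard ≠ 2)
    (hcard' : 2 ≤ (scrRange 𝓡' f).ncard)
    (hDict : Dictatorship 𝓡' f h) : False := by
  classical
  have hne_xy : x ≠ y := fp_ne hxy
  have hr'ne : (scrRange 𝓡' f).Nonempty := Set.nonempty_of_ncard_ne_zero (by omega)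
  obtain ⟨v0, R0, hR0, hv0⟩ := hr'ne
  have hD'ne : (𝓡' i).Nonempty := ⟨R0 i, hR0 i⟩
  have hsubD : 𝓡' i ⊆ 𝓡 i := by
    intro P hP
    refine nc_mem (hNC i) (nc_sto hNC' hP) ?_
    intro p hp
    refine nc_resp hNC' hP p ?_
    rw [hS] at hp; exact hp.1
  have hsub : ∀ j, 𝓡' j ⊆ 𝓡 j := by
    intro j
    by_cases hj : j = i
    · subst hj; exact hsubD
    · rw [hAgree j hj]
  have hIn : ∀ {R : N → Pref X}, InDomain 𝓡' R → InDomain 𝓡 R := fun hR j => hsub j (hR j)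
  have hNC'all : ∀ j, NonConditional (𝓡' j) := by
    intro j
    by_cases hj : j = i
    · subst hj; exact hNC'
    · rw [hAgree j hj]; exact hNC j
  have hr'r : scrRange 𝓡' f ⊆ scrRange 𝓡 f := by
    rintro v ⟨R, hR, hf⟩; exact ⟨R, hIn hR, hf⟩
  have memD' : ∀ {P : Pref X}, P ∈ 𝓡 i → P x y → P ∈ 𝓡' i := by
    intro P hP hPxy
    refine nc_mem hNC' (nc_sto (hNC i) hP) ?_
    rintro ⟨u, v⟩ hp
    by_cases hpe : ((u, v) : X × X) = (x, y)
    · rw [Prod.mk.injEq] at hpe; rw [hpe.1, hpe.2]; exact hPxy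
    · exact fp_rel (by rw [hS]; exact ⟨hp, hpe⟩) hP
  have hyxOf : ∀ {P : Pref X}, P ∈ 𝓡 i → ¬ P x y → P y x := fun {P} hP hn =>
    sto_cases (nc_sto (hNC i) hP) hne_xy hn
  have hIn'' : ∀ {R : N → Pref X}, InDomain 𝓡 R → R i x y → InDomain 𝓡' R := by
    intro R hR hxyP j
    by_cases hj : j = i
    · rw [hj]; exact memD' (hR i) hxyP
    · rw [hAgree j hj]; exact hR j
  have hQdom : ∀ {R : N → Pref X}, InDomain 𝓡 R → R i y x →
      InDomain 𝓡' (Function.update R i (Qc (R i) x y)) := by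
    intro R hR hyx j
    by_cases hj : j = i
    · rw [hj, Function.update_self]
      exact Qc_mem (hNC i) hNC' hD'ne hxy hS (hR i) hyx
    · rw [Function.update_of_ne hj, hAgree j hj]; exact hR j
  have hrange' : ∀ {R : N → Pref X}, InDomain 𝓡' R → f R ∈ scrRange 𝓡' f :=
    fun {R} hR => ⟨R, hR, rfl⟩
  have huniq : ∀ R1 R2 : N → Pref X, InDomain 𝓡' R1 → InDomain 𝓡' R2 → R1 h = R2 h →
      f R1 = f R2 := by
    intro R1 R2 h1 h2 hh
    rcases hDict R1 h1 (f R2) (hrange' h2) with e1 | e1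
    · exact e1
    rcases hDict R2 h2 (f R1) (hrange' h1) with e2 | e2
    · exact e2.symm
    rw [hh] at e1
    exact absurd e1 (sto_asymm (nc_sto (hNC'all h) (h2 h)) e2)
  have hdict_top : ∀ {R : N → Pref X}, InDomain 𝓡' R → ∀ {c : X}, c ∈ scrRange 𝓡' f →
      (∀ w ∈ scrRange 𝓡' f, c = w ∨ R h c w) → f R = c := by
    intro R hR c hc hmax
    rcases hDict R hR c hc with h1 | h1
    · exact h1
    rcases hmax _ (hrange' hR) with h2 | h2
    · exact h2.symm
    exact absurd h1 (sto_asymm (nc_sto (hNC'all h) (hR h)) h2)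
  -- Step 1: any "special" outcome must be y
  have step1 : ∀ R : N → Pref X, InDomain 𝓡 R → R i y x →
      f R = f (Function.update R i (Qc (R i) x y)) ∨ f R = y := by
    intro R hR hyx
    rcases companion hAgree hNC hNC' hD'ne hxy hS hSP hR hyx with hc | hc
    · exact Or.inl hc
    · by_cases hay : f R = y
      · exact Or.inr hay
      · exfalso
        obtain ⟨hbx, hya, hax⟩ := hc
        have hPya : R i y (f R) := hya.resolve_right hay
        have hPsto := nc_sto (hNC i) (hR i)
        have hanex : f R ≠ x := fun e => hPsto.irrefl x (e ▸ hax)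
        have hH1 : ∀ d, (d ∈ ({y} : Set X) ∨ d ∈ ({x} : Set X)) →
            d ≠ f R ∧ (d, f R) ∉ fixedPairs (𝓡 i) := by
          intro d hd
          rcases hd with hd | hd
          · rw [Set.mem_singleton_iff] at hd; subst hd
            refine ⟨fun e => hay e.symm, fun hfp => ?_⟩
            have hxf : ((x, f R) : X × X) ∈ fixedPairs (𝓡 i) := by
              rw [hS]
              refine ⟨fp_trans hNC' hD'ne hxy (by rw [hS] at hfp; exact hfp.1), ?_⟩
              intro hmem
              rw [Set.mem_singleton_iff, Prod.mk.injEq] at hmem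
              exact hay hmem.2
            exact sto_asymm hPsto hax (fp_rel hxf (hR i))
          · rw [Set.mem_singleton_iff] at hd; subst hd
            exact ⟨fun e => hanex e.symm, fun hfp => sto_asymm hPsto hax (fp_rel hfp (hR i))⟩
        have hH2 : ∀ d ∈ ({x} : Set X), d ≠ y ∧ (d, y) ∉ fixedPairs (𝓡 i) := by
          intro d hd
          rw [Set.mem_singleton_iff] at hd; subst hd
          refine ⟨hne_xy, fun hfp => ?_⟩
          rw [hS] at hfp; exact hfp.2 rfl
        obtain ⟨W, hWmem, hW1, hW2⟩ := nc_star2 (hNC i) ⟨R i, hR i⟩ (f R) y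
            ({y} : Set X) ({x} : Set X) hH1 hH2
        have hWsto := nc_sto (hNC i) hWmem
        have hWay : W (f R) y := hW1 y rfl
        have hWyx : W y x := hW2 x rfl
        set R2 := Function.update R i W with hR2def
        have hR2 : InDomain 𝓡 R2 := indomain_update hR hWmem
        have haO : f R ∈ optionSet f i R2 (𝓡 i) :=
          ⟨R i, hR i, by rw [hR2def, Function.update_idem, Function.update_eq_self]⟩
        have hmax := lemA hSP hNC hR2 i haO
        have hR2i : R2 i = W := by rw [hR2def]; exact Function.update_self i W R
        rw [hR2i] at hmax
        have hR2yx : R2 i y x := by rw [hR2i]; exact hWyx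
        have hbval : f (Function.update R2 i (Qc (R2 i) x y)) = x := by
          have e1 : f (Function.update R2 i (Qc (R2 i) x y)) =
              f (Function.update R i (Qc (R i) x y)) := by
            apply huniq _ _ (hQdom hR2 hR2yx) (hQdom hR hyx)
            rw [Function.update_of_ne hhi, Function.update_of_ne hhi, hR2def,
              Function.update_of_ne hhi]
          rw [e1, hbx]
        rcases companion hAgree hNC hNC' hD'ne hxy hS hSP hR2 hR2yx with h2 | h2
        · rw [hbval] at h2
          rcases hmax with h3 | h3
          · exact hanex (h3.trans h2)
          · rw [h2] at h3
            exact sto_asymm hWsto (hWsto.trans _ _ _ hWay hWyx) h3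
        · obtain ⟨-, hy2, -⟩ := h2
          rw [hR2i] at hy2
          rcases hy2 with hy2 | hy2
          · rcases hmax with h3 | h3
            · rw [← h3] at hy2
              exact sto_asymm hWsto hWay hy2
            · exact sto_asymm hWsto (hWsto.trans _ _ _ hWay hy2) h3
          · rcases hmax with h3 | h3
            · exact hay (h3.trans hy2)
            · rw [hy2] at h3
              exact sto_asymm hWsto hWay h3
  -- the "no special profile" case gives a dictatorship of h on the large domain
  by_cases hns : ∀ R : N → Pref X, InDomain 𝓡 R → R i y x →
      f R = f (Function.update R i (Qc (R i) x y))
  · refine hND h ?_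
    intro R hR w hw
    have hwr' : w ∈ scrRange 𝓡' f := by
      obtain ⟨Rw, hRw, hfw⟩ := hw
      by_cases hxyP : Rw i x y
      · exact hfw ▸ hrange' (hIn'' hRw hxyP)
      · have hyx := hyxOf (hRw i) hxyP
        rw [← hfw, hns Rw hRw hyx]
        exact hrange' (hQdom hRw hyx)
    by_cases hxyP : R i x y
    · exact hDict R (hIn'' hR hxyP) w hwr'
    · have hyx := hyxOf (hR i) hxyP
      have hd := hDict _ (hQdom hR hyx) w hwr'
      rw [Function.update_of_ne hhi] at hd
      rw [hns R hR hyx]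
      exact hd
  · push_neg at hns
    obtain ⟨Rs, hRs, hsyx, hnefs⟩ := hns
    have hcs := (companion hAgree hNC hNC' hD'ne hxy hS hSP hRs hsyx).resolve_left hnefs
    have hbx : f (Function.update Rs i (Qc (Rs i) x y)) = x := hcs.1
    have hfRsy : f Rs = y := (step1 Rs hRs hsyx).resolve_left hnefs
    have hxr' : x ∈ scrRange 𝓡' f := hbx ▸ hrange' (hQdom hRs hsyx)
    by_cases hcex : ∃ c ∈ scrRange 𝓡' f, c ≠ x ∧ c ≠ y
    case neg =>
      push_neg at hcex
      have hsub2 : scrRange 𝓡 f ⊆ ({x, y} : Set X) := by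
        rintro v ⟨Rv, hRv, rfl⟩
        rw [Set.mem_insert_iff, Set.mem_singleton_iff]
        rcases (by
          by_cases hxyP : Rv i x y
          · exact Or.inl (hrange' (hIn'' hRv hxyP))
          · have hyx := hyxOf (hRv i) hxyP
            rcases step1 Rv hRv hyx with h1 | h1
            · rw [h1]; exact Or.inl (hrange' (hQdom hRv hyx))
            · exact Or.inr h1 :
          f Rv ∈ scrRange 𝓡' f ∨ f Rv = y) with h1 | h1
        · by_cases he : f Rv = x
          · exact Or.inl he
          · exact Or.inr (hcex _ h1 he)
        · exact Or.inr h1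
      have h2le : (scrRange 𝓡 f).ncard ≤ 2 := by
        calc (scrRange 𝓡 f).ncard ≤ ({x, y} : Set X).ncard :=
              Set.ncard_le_ncard hsub2 (Set.toFinite _)
          _ = 2 := Set.ncard_pair hne_xy
      have h2ge : 2 ≤ (scrRange 𝓡 f).ncard :=
        le_trans hcard' (Set.ncard_le_ncard hr'r (Set.toFinite _))
      exact hcard (le_antisymm h2le h2ge)
    case pos =>
      obtain ⟨c, hcr', hcx, hcy⟩ := hcex
      have hRsh : Rs h ∈ 𝓡 h := hRs h
      have hRshsto := nc_sto (hNC h) hRsh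
      have hyΩ : y ∈ optionSet f h Rs (𝓡 h) := hfRsy ▸ self_mem_optionSet f h Rs hRsh
      have w1 : ∀ w ∈ optionSet f h Rs (𝓡 h), w = y ∨ Rs h y w := by
        intro w hw
        have hl := lemA hSP hNC hRs h hw
        rwa [hfRsy] at hl
      have hxmax : ∀ w ∈ scrRange 𝓡' f, x = w ∨ Rs h x w := by
        intro w hw
        have hd := hDict _ (hQdom hRs hsyx) w hw
        rwa [hbx, Function.update_of_ne hhi] at hd
      have lemF : ∀ Ph ∈ 𝓡 h, ∀ c' : X, c' ≠ x → c' ∈ scrRange 𝓡' f →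
          (∀ w ∈ scrRange 𝓡' f, c' = w ∨ Ph c' w) → f (Function.update Rs h Ph) = c' := by
        intro Ph hPh c' hc'x hc'r hmaxp
        have hR1 : InDomain 𝓡 (Function.update Rs h Ph) := indomain_update hRs hPh
        have hR1i : (Function.update Rs h Ph) i = Rs i := Function.update_of_ne (Ne.symm hhi) _ _
        have hR1yx : (Function.update Rs h Ph) i y x := by rw [hR1i]; exact hsyx
        have hfQ1 : f (Function.update (Function.update Rs h Ph) i
            (Qc ((Function.update Rs h Ph) i) x y)) = c' := by
          apply hdict_top (hQdom hR1 hR1yx) hc'r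
          rw [Function.update_of_ne hhi, Function.update_self]
          exact hmaxp
        rcases companion hAgree hNC hNC' hD'ne hxy hS hSP hR1 hR1yx with h1 | h1
        · rw [h1, hfQ1]
        · rw [hfQ1] at h1; exact absurd h1.1 hc'x
      have hreal : ∀ c' ∈ scrRange 𝓡' f, ∃ Ph ∈ 𝓡 h,
          ∀ w ∈ scrRange 𝓡' f, c' = w ∨ Ph c' w := by
        rintro c' ⟨Rc, hRc, rfl⟩
        exact ⟨Rc h, (by rw [← hAgree h hhi]; exact hRc h), fun w hw => hDict Rc hRc w hw⟩
      obtain ⟨Pc, hPc, hPcmax⟩ := hreal c hcr'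
      have hfPc : f (Function.update Rs h Pc) = c := lemF Pc hPc c hcx hcr' hPcmax
      have hΩeq : ∀ Ph : Pref X, optionSet f h (Function.update Rs h Ph) (𝓡 h) =
          optionSet f h Rs (𝓡 h) := fun Ph =>
        optionSet_congr (fun j hj => Function.update_of_ne hj _ _)
      have hcΩ : c ∈ optionSet f h Rs (𝓡 h) := ⟨Pc, hPc, hfPc⟩
      have w2 : ∀ w ∈ optionSet f h Rs (𝓡 h), w = c ∨ Pc c w := by
        intro w hw
        have hl := lemA hSP hNC (indomain_update hRs hPc) h (by rw [hΩeq]; exact hw)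
        rwa [hfPc, Function.update_self] at hl
      have hPccy : Pc c y := by
        rcases w2 y hyΩ with h1 | h1
        · exact absurd h1.symm hcy
        · exact h1
      by_cases hbr : y ∈ scrRange 𝓡' f ∨ (x, y) ∈ fixedPairs (𝓡 h)
      · -- the dagger construction
        have hRsxy : Rs h x y := by
          rcases hbr with hb | hb
          · exact (hxmax y hb).resolve_left hne_xy
          · exact fp_rel hb hRsh
        have hxnΩ : x ∉ optionSet f h Rs (𝓡 h) := by
          intro hxo
          rcases w1 x hxo with h1 | h1
          · exact hne_xy h1
          · exact sto_asymm hRshsto hRsxy h1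
        have hH1 : ∀ d, (d ∈ scrRange 𝓡' f \ {x} ∨ d ∈ ({y} : Set X)) →
            d ≠ x ∧ (d, x) ∉ fixedPairs (𝓡 h) := by
          intro d hd
          rcases hd with ⟨hdr, hdx⟩ | hd
          · have hdnx : d ≠ x := fun e => hdx e
            refine ⟨hdnx, fun hfp => ?_⟩
            have h1 : Rs h d x := fp_rel hfp hRsh
            have h2 := (hxmax d hdr).resolve_left (fun e => hdnx e.symm)
            exact sto_asymm hRshsto h2 h1
          · rw [Set.mem_singleton_iff] at hd; subst hd
            exact ⟨Ne.symm hne_xy, fun hfp => sto_asymm hRshsto hRsxy (fp_rel hfp hRsh)⟩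
        have hH2 : ∀ d ∈ ({y} : Set X), d ≠ c ∧ (d, c) ∉ fixedPairs (𝓡 h) := by
          intro d hd
          rw [Set.mem_singleton_iff] at hd; subst hd
          exact ⟨fun e => hcy e.symm,
            fun hfp => sto_asymm (nc_sto (hNC h) hPc) hPccy (fp_rel hfp hPc)⟩
        obtain ⟨Pd, hPd, hPd1, hPd2⟩ := nc_star2 (hNC h) ⟨Rs h, hRsh⟩ x c
            (scrRange 𝓡' f \ {x}) ({y} : Set X) hH1 hH2
        have hPdxmax : ∀ w ∈ scrRange 𝓡' f, x = w ∨ Pd x w := by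
          intro w hw
          by_cases hwx : w = x
          · exact Or.inl hwx.symm
          · exact Or.inr (hPd1 w ⟨hw, hwx⟩)
        have hR1 : InDomain 𝓡 (Function.update Rs h Pd) := indomain_update hRs hPd
        have hR1yx : (Function.update Rs h Pd) i y x := by
          rw [Function.update_of_ne (Ne.symm hhi)]; exact hsyx
        have hfQ1 : f (Function.update (Function.update Rs h Pd) i
            (Qc ((Function.update Rs h Pd) i) x y)) = x := by
          apply hdict_top (hQdom hR1 hR1yx) hxr'
          rw [Function.update_of_ne hhi, Function.update_self]
          exact hPdxmax
        rcases step1 _ hR1 hR1yx with h1 | h1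
        · rw [hfQ1] at h1
          exact hxnΩ ⟨Pd, hPd, h1⟩
        · have hl := lemA hSP hNC hR1 h (by rw [hΩeq]; exact hcΩ)
          rw [h1, Function.update_self] at hl
          rcases hl with h2 | h2
          · exact hcy h2
          · exact sto_asymm (nc_sto (hNC h) hPd) (hPd2 y rfl) h2
      · -- the double-dagger construction
        push_neg at hbr
        obtain ⟨hynr', hxynS⟩ := hbr
        have hH1 : ∀ d, (d ∈ ({c} : Set X) ∨ d ∈ scrRange 𝓡' f \ {c}) →
            d ≠ y ∧ (d, y) ∉ fixedPairs (𝓡 h) := by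
          intro d hd
          have hdr' : d ∈ scrRange 𝓡' f := by
            rcases hd with hd | hd
            · rw [Set.mem_singleton_iff] at hd; rw [hd]; exact hcr'
            · exact hd.1
          refine ⟨fun e => hynr' (e ▸ hdr'), fun hfp => ?_⟩
          by_cases hdx : d = x
          · rw [hdx] at hfp; exact hxynS hfp
          · have hdΩ : d ∈ optionSet f h Rs (𝓡 h) := by
              obtain ⟨Pd', hPd', hmax'⟩ := hreal d hdr'
              exact ⟨Pd', hPd', lemF Pd' hPd' d hdx hdr' hmax'⟩
            have h2 := (w1 d hdΩ).resolve_left (fun e => hynr' (e ▸ hdr'))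
            exact sto_asymm hRshsto h2 (fp_rel hfp hRsh)
        have hH2 : ∀ d ∈ scrRange 𝓡' f \ {c}, d ≠ c ∧ (d, c) ∉ fixedPairs (𝓡 h) := by
          intro d hd
          refine ⟨fun e => hd.2 e, fun hfp => ?_⟩
          have h1 := (hPcmax d hd.1).resolve_left (fun e => hd.2 e.symm)
          exact sto_asymm (nc_sto (hNC h) hPc) h1 (fp_rel hfp hPc)
        obtain ⟨Pdd, hPdd, hPdd1, hPdd2⟩ := nc_star2 (hNC h) ⟨Rs h, hRsh⟩ y c
            ({c} : Set X) (scrRange 𝓡' f \ {c}) hH1 hH2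
        have hPddcmax : ∀ w ∈ scrRange 𝓡' f, c = w ∨ Pdd c w := by
          intro w hw
          by_cases hwc : w = c
          · exact Or.inl hwc.symm
          · exact Or.inr (hPdd2 w ⟨hw, hwc⟩)
        have hfdd : f (Function.update Rs h Pdd) = c := lemF Pdd hPdd c hcx hcr' hPddcmax
        have hl := lemA hSP hNC (indomain_update hRs hPdd) h (by rw [hΩeq]; exact hyΩ)
        rw [hfdd, Function.update_self] at hl
        rcases hl with h1 | h1
        · exact hcy h1.symm
        · exact sto_asymm (nc_sto (hNC h) hPdd) (hPdd1 c rfl) h1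

end S9

namespace S9

/-- If the restriction of `f` is a dictatorship of agent `i` itself, we get a
contradiction. -/
lemma caseEq {N X : Type*} [Fintype N] [Fintype X] [DecidableEq N]
    (i : N) (𝓡 𝓡' : N → Set (Pref X))
    (hAgree : ∀ j, j ≠ i → 𝓡' j = 𝓡 j)
    (hNC : ∀ j, NonConditional (𝓡 j)) (hNC' : NonConditional (𝓡' i))
    (x y : X) (hxy : (x, y) ∈ fixedPairs (𝓡' i))
    (hS : fixedPairs (𝓡 i) = fixedPairs (𝓡' i) \ {(x, y)})
    (f : (N → Pref X) → X) (hSP : StrategyProof 𝓡 f)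
    (hND : NonDictatorial 𝓡 f)
    (hcard' : 2 ≤ (scrRange 𝓡' f).ncard)
    (hDict : Dictatorship 𝓡' f i) : False := by
  classical
  have hne_xy : x ≠ y := fp_ne hxy
  have hr'ne : (scrRange 𝓡' f).Nonempty := Set.nonempty_of_ncard_ne_zero (by omega)
  obtain ⟨v0, R0, hR0, hv0⟩ := hr'ne
  have hD'ne : (𝓡' i).Nonempty := ⟨R0 i, hR0 i⟩
  have hsubD : 𝓡' i ⊆ 𝓡 i := by
    intro P hP
    refine nc_mem (hNC i) (nc_sto hNC' hP) ?_
    intro p hp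
    refine nc_resp hNC' hP p ?_
    rw [hS] at hp; exact hp.1
  have memD' : ∀ {P : Pref X}, P ∈ 𝓡 i → P x y → P ∈ 𝓡' i := by
    intro P hP hPxy
    refine nc_mem hNC' (nc_sto (hNC i) hP) ?_
    rintro ⟨u, v⟩ hp
    by_cases hpe : ((u, v) : X × X) = (x, y)
    · rw [Prod.mk.injEq] at hpe; rw [hpe.1, hpe.2]; exact hPxy
    · exact fp_rel (by rw [hS]; exact ⟨hp, hpe⟩) hP
  have hyxOf : ∀ {P : Pref X}, P ∈ 𝓡 i → ¬ P x y → P y x := fun {P} hP hn =>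
    sto_cases (nc_sto (hNC i) hP) hne_xy hn
  have hIn'' : ∀ {R : N → Pref X}, InDomain 𝓡 R → R i x y → InDomain 𝓡' R := by
    intro R hR hxyP j
    by_cases hj : j = i
    · rw [hj]; exact memD' (hR i) hxyP
    · rw [hAgree j hj]; exact hR j
  have hInUp : ∀ {R : N → Pref X}, InDomain 𝓡 R → ∀ {P : Pref X}, P ∈ 𝓡' i →
      InDomain 𝓡' (Function.update R i P) := by
    intro R hR P hP j
    by_cases hj : j = i
    · rw [hj, Function.update_self]; exact hP
    · rw [Function.update_of_ne hj, hAgree j hj]; exact hR j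
  have hQdom : ∀ {R : N → Pref X}, InDomain 𝓡 R → R i y x →
      InDomain 𝓡' (Function.update R i (Qc (R i) x y)) := by
    intro R hR hyx
    exact hInUp hR (Qc_mem (hNC i) hNC' hD'ne hxy hS (hR i) hyx)
  have hrange' : ∀ {R : N → Pref X}, InDomain 𝓡' R → f R ∈ scrRange 𝓡' f :=
    fun {R} hR => ⟨R, hR, rfl⟩
  have hdict_top : ∀ {R : N → Pref X}, InDomain 𝓡' R → ∀ {c : X}, c ∈ scrRange 𝓡' f →
      (∀ w ∈ scrRange 𝓡' f, c = w ∨ R i c w) → f R = c := by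
    intro R hR c hc hmax
    rcases hDict R hR c hc with h1 | h1
    · exact h1
    rcases hmax _ (hrange' hR) with h2 | h2
    · exact h2.symm
    exact absurd h1 (sto_asymm (nc_sto hNC' (hR i)) h2)
  have hreal : ∀ c' ∈ scrRange 𝓡' f, ∃ Pc ∈ 𝓡' i,
      ∀ w ∈ scrRange 𝓡' f, c' = w ∨ Pc c' w := by
    rintro c' ⟨Rc, hRc, rfl⟩
    exact ⟨Rc i, hRc i, fun w hw => hDict Rc hRc w hw⟩
  have hBmem : ∀ R : N → Pref X, InDomain 𝓡 R → ∀ c' ∈ scrRange 𝓡' f,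
      c' ∈ optionSet f i R (𝓡 i) := by
    intro R hR c' hc'
    obtain ⟨Pc, hPc, hmax⟩ := hreal c' hc'
    refine ⟨Pc, hsubD hPc, ?_⟩
    apply hdict_top (hInUp hR hPc) hc'
    rw [Function.update_self]; exact hmax
  have hC : ∀ R : N → Pref X, InDomain 𝓡 R → ∀ c' ∈ scrRange 𝓡' f,
      f R = c' ∨ R i (f R) c' := by
    intro R hR c' hc'
    rcases lemA hSP hNC hR i (hBmem R hR c' hc') with h1 | h1
    · exact Or.inl h1.symm
    · exact Or.inr h1
  by_cases hxr' : x ∈ scrRange 𝓡' f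
  case neg =>
    refine hND i ?_
    intro R hR w hw
    have hwr' : w ∈ scrRange 𝓡' f := by
      obtain ⟨Rw, hRw, rfl⟩ := hw
      by_cases hxyP : Rw i x y
      · exact hrange' (hIn'' hRw hxyP)
      · have hyx := hyxOf (hRw i) hxyP
        rcases companion hAgree hNC hNC' hD'ne hxy hS hSP hRw hyx with h1 | h1
        · rw [h1]; exact hrange' (hQdom hRw hyx)
        · exact absurd (h1.1 ▸ hrange' (hQdom hRw hyx)) hxr'
    exact hC R hR w hwr'
  case pos =>
  have hynr' : y ∉ scrRange 𝓡' f := by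
    intro hyr
    obtain ⟨Py, hPy, hPymax⟩ := hreal y hyr
    have h1 : Py y x := (hPymax x hxr').resolve_left (Ne.symm hne_xy)
    exact sto_asymm (nc_sto hNC' hPy) (fp_rel hxy hPy) h1
  -- Step 1': all outcomes are in r' or equal to y
  have step1' : ∀ R : N → Pref X, InDomain 𝓡 R → f R ∈ scrRange 𝓡' f ∨ f R = y := by
    intro R hR
    by_cases hxyP : R i x y
    · exact Or.inl (hrange' (hIn'' hR hxyP))
    · have hyx := hyxOf (hR i) hxyP
      rcases companion hAgree hNC hNC' hD'ne hxy hS hSP hR hyx with h1 | h1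
      · rw [h1]; exact Or.inl (hrange' (hQdom hR hyx))
      · by_cases hay : f R = y
        · exact Or.inr hay
        · by_cases har : f R ∈ scrRange 𝓡' f
          · exact Or.inl har
          · exfalso
            obtain ⟨hbx, hya, hax⟩ := h1
            have hPya : R i y (f R) := hya.resolve_right hay
            have hPsto := nc_sto (hNC i) (hR i)
            have hanex : f R ≠ x := fun e => hPsto.irrefl x (e ▸ hax)
            have hydom : ∀ w ∈ scrRange 𝓡' f, w ≠ x → R i y w := by
              intro w hw hwx
              have hd := hDict _ (hQdom hR hyx) w hw
              rw [hbx] at hd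
              rcases hd with h2 | h2
              · exact absurd h2.symm hwx
              · rw [Function.update_self] at h2
                rcases h2 with ⟨-, -, h3 | h3⟩ | ⟨h3, -, -⟩ | ⟨h3, -, -⟩
                · exact h3
                · exact absurd h3 (fun e => hynr' (e ▸ hw))
                · exact absurd rfl h3
                · exact absurd rfl h3
            have hadom : ∀ w ∈ scrRange 𝓡' f, R i (f R) w := by
              intro w hw
              rcases hC R hR w hw with h2 | h2
              · exact absurd (h2 ▸ hw) har
              · exact h2
            have hH1 : ∀ d, (d ∈ ({y} : Set X) ∨ d ∈ insert x (scrRange 𝓡' f)) →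
                d ≠ f R ∧ (d, f R) ∉ fixedPairs (𝓡 i) := by
              intro d hd
              rcases hd with hd | hd
              · rw [Set.mem_singleton_iff] at hd; subst hd
                refine ⟨fun e => hay e.symm, fun hfp => ?_⟩
                have hxf : ((x, f R) : X × X) ∈ fixedPairs (𝓡 i) := by
                  rw [hS]
                  refine ⟨fp_trans hNC' hD'ne hxy (by rw [hS] at hfp; exact hfp.1), ?_⟩
                  intro hmem
                  rw [Set.mem_singleton_iff, Prod.mk.injEq] at hmem
                  exact hay hmem.2
                exact sto_asymm hPsto hax (fp_rel hxf (hR i))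
              · rcases Set.mem_insert_iff.mp hd with rfl | hdr
                · exact ⟨fun e => hanex e.symm,
                    fun hfp => sto_asymm hPsto hax (fp_rel hfp (hR i))⟩
                · exact ⟨fun e => har (e ▸ hdr),
                    fun hfp => sto_asymm hPsto (hadom d hdr) (fp_rel hfp (hR i))⟩
            have hH2 : ∀ d ∈ insert x (scrRange 𝓡' f),
                d ≠ y ∧ (d, y) ∉ fixedPairs (𝓡 i) := by
              intro d hd
              rcases Set.mem_insert_iff.mp hd with rfl | hdr
              · exact ⟨hne_xy, fun hfp => (by rw [hS] at hfp; exact hfp.2 rfl)⟩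
              · refine ⟨fun e => hynr' (e ▸ hdr), fun hfp => ?_⟩
                by_cases hdx : d = x
                · rw [hdx] at hfp; rw [hS] at hfp; exact hfp.2 rfl
                · exact sto_asymm hPsto (hydom d hdr hdx) (fp_rel hfp (hR i))
            obtain ⟨W, hWmem, hW1, hW2⟩ := nc_star2 (hNC i) ⟨R i, hR i⟩ (f R) y
                ({y} : Set X) (insert x (scrRange 𝓡' f)) hH1 hH2
            have hWsto := nc_sto (hNC i) hWmem
            have hWay : W (f R) y := hW1 y rfl
            have hWyx : W y x := hW2 x (Set.mem_insert x _)
            have hWyr : ∀ w ∈ scrRange 𝓡' f, W y w := fun w hw =>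
              hW2 w (Set.mem_insert_of_mem x hw)
            set R2 := Function.update R i W with hR2def
            have hR2 : InDomain 𝓡 R2 := indomain_update hR hWmem
            have haO : f R ∈ optionSet f i R2 (𝓡 i) :=
              ⟨R i, hR i, by rw [hR2def, Function.update_idem, Function.update_eq_self]⟩
            have hmax := lemA hSP hNC hR2 i haO
            have hR2i : R2 i = W := by rw [hR2def]; exact Function.update_self i W R
            rw [hR2i] at hmax
            have hR2yx : R2 i y x := by rw [hR2i]; exact hWyx
            rcases companion hAgree hNC hNC' hD'ne hxy hS hSP hR2 hR2yx with h2 | h2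
            · have hm : f R2 ∈ scrRange 𝓡' f := by
                rw [h2]; exact hrange' (hQdom hR2 hR2yx)
              rcases hmax with h3 | h3
              · exact har (h3 ▸ hm)
              · exact sto_asymm hWsto (hWsto.trans _ _ _ hWay (hWyr _ hm)) h3
            · obtain ⟨-, hy2, -⟩ := h2
              rw [hR2i] at hy2
              rcases hy2 with hy2 | hy2
              · rcases hmax with h3 | h3
                · rw [← h3] at hy2
                  exact sto_asymm hWsto hWay hy2
                · exact sto_asymm hWsto (hWsto.trans _ _ _ hWay hy2) h3
              · rcases hmax with h3 | h3
                · exact hay (h3.trans hy2)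
                · rw [hy2] at h3
                  exact sto_asymm hWsto hWay h3
  -- option sets are contained in r' ∪ {y}
  have hOsub : ∀ R : N → Pref X, InDomain 𝓡 R → ∀ w ∈ optionSet f i R (𝓡 i),
      w ∈ scrRange 𝓡' f ∨ w = y := by
    rintro R hR w ⟨P', hP', rfl⟩
    exact step1' _ (indomain_update hR hP')
  -- f is not a dictatorship of i on the large domain: extract a failure at y
  have hndict := hND i
  rw [Dictatorship] at hndict
  push_neg at hndict
  obtain ⟨R, hR, w, hw, hne1, hne2⟩ := hndict
  have hwy : w = y := by
    by_cases hwr : w ∈ scrRange 𝓡' f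
    · rcases hC R hR w hwr with h1 | h1
      · exact absurd h1 hne1
      · exact absurd h1 hne2
    · obtain ⟨Rw, hRw, hfw⟩ := hw
      rcases step1' Rw hRw with h1 | h1
      · exact absurd (hfw ▸ h1) hwr
      · rw [← hfw]; exact h1
  rw [hwy] at hne1 hne2 hw
  obtain ⟨Rw, hRw, hfwy⟩ := hw
  have hyavailw : y ∈ optionSet f i Rw (𝓡 i) := hfwy ▸ self_mem_optionSet f i Rw (hRw i)
  have hynR : y ∉ optionSet f i R (𝓡 i) := by
    intro hyo
    rcases lemA hSP hNC hR i hyo with h1 | h1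
    · exact hne1 h1.symm
    · exact hne2 h1
  -- pivot walk
  have walk : ∀ (s : Finset N) (T : N → Pref X), InDomain 𝓡 T → (∀ k, k ∉ s → T k = R k) →
      y ∈ optionSet f i T (𝓡 i) →
      ∃ T₁ T₂ : N → Pref X, ∃ j : N, j ≠ i ∧ InDomain 𝓡 T₁ ∧ InDomain 𝓡 T₂ ∧
        (∀ k, k ≠ j → T₁ k = T₂ k) ∧ y ∈ optionSet f i T₁ (𝓡 i) ∧
        y ∉ optionSet f i T₂ (𝓡 i) := by
    intro s
    induction s using Finset.induction_on with
    | empty =>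
      intro T hT hTeq hyT
      exfalso
      have hTR : T = R := funext fun k => hTeq k (Finset.notMem_empty k)
      rw [hTR] at hyT
      exact hynR hyT
    | @insert j s hjs ih =>
      intro T hT hTeq hyT
      have hT' : InDomain 𝓡 (Function.update T j (R j)) := indomain_update hT (hR j)
      have hT'eq : ∀ k, k ∉ s → (Function.update T j (R j)) k = R k := by
        intro k hk
        by_cases hkj : k = j
        · rw [hkj, Function.update_self]
        · rw [Function.update_of_ne hkj]
          exact hTeq k (by simp [Finset.mem_insert, hkj, hk])
      by_cases hyT' : y ∈ optionSet f i (Function.update T j (R j)) (𝓡 i)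
      · exact ih _ hT' hT'eq hyT'
      · by_cases hji : j = i
        · exfalso
          apply hyT'
          have hagr : ∀ k, k ≠ i → T k = Function.update T j (R j) k := by
            intro k hk
            rw [Function.update_of_ne (show k ≠ j from fun e => hk (e.trans hji))]
          rw [← optionSet_congr hagr]
          exact hyT
        · exact ⟨T, _, j, hji, hT, hT',
            fun k hk => (Function.update_of_ne hk _ _).symm, hyT, hyT'⟩
  obtain ⟨T₁, T₂, j, hji, hT₁, hT₂, h12, hy1, hy2⟩ :=
    walk Finset.univ Rw hRw (fun k hk => absurd (Finset.mem_univ k) hk) hyavailw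
  -- two elements of the restricted range
  obtain ⟨c₁, hc₁, c₂, hc₂, hcc⟩ := (Set.one_lt_ncard (Set.toFinite _)).mp
    (lt_of_lt_of_le one_lt_two hcard')
  -- the witness that puts y above everything in r'
  obtain ⟨Phat, hPhat, hfhat⟩ := id hy1
  have hOT1eq : optionSet f i (Function.update T₁ i Phat) (𝓡 i) = optionSet f i T₁ (𝓡 i) :=
    optionSet_congr (fun k hk => Function.update_of_ne hk _ _)
  have hhatdom : ∀ w ∈ scrRange 𝓡' f, Phat y w := by
    intro w hw
    have hmem : w ∈ optionSet f i (Function.update T₁ i Phat) (𝓡 i) := by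
      rw [hOT1eq]; exact hBmem T₁ hT₁ w hw
    rcases lemA hSP hNC (indomain_update hT₁ hPhat) i hmem with h1 | h1
    · rw [hfhat] at h1; exact absurd (h1 ▸ hw) hynr'
    · rw [hfhat, Function.update_self] at h1; exact h1
  -- star orders topped by y, then a chosen element of r'
  have hWstar : ∀ c' ∈ scrRange 𝓡' f, ∃ W ∈ 𝓡 i, (∀ w ∈ scrRange 𝓡' f, W y w) ∧
      (∀ w ∈ scrRange 𝓡' f, c' = w ∨ W c' w) := by
    intro c' hc'
    obtain ⟨Pc, hPc, hPcmax⟩ := hreal c' hc'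
    have hH1 : ∀ d, (d ∈ ({c'} : Set X) ∨ d ∈ scrRange 𝓡' f \ {c'}) →
        d ≠ y ∧ (d, y) ∉ fixedPairs (𝓡 i) := by
      intro d hd
      have hdr : d ∈ scrRange 𝓡' f := by
        rcases hd with hd | hd
        · rw [Set.mem_singleton_iff] at hd; rw [hd]; exact hc'
        · exact hd.1
      refine ⟨fun e => hynr' (e ▸ hdr), fun hfp => ?_⟩
      exact sto_asymm (nc_sto (hNC i) hPhat) (hhatdom d hdr) (fp_rel hfp hPhat)
    have hH2 : ∀ d ∈ scrRange 𝓡' f \ {c'}, d ≠ c' ∧ (d, c') ∉ fixedPairs (𝓡 i) := by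
      intro d hd
      refine ⟨fun e => hd.2 e, fun hfp => ?_⟩
      have h1 := (hPcmax d hd.1).resolve_left (fun e => hd.2 e.symm)
      exact sto_asymm (nc_sto hNC' hPc) h1 (fp_rel hfp (hsubD hPc))
    obtain ⟨W, hWmem, hW1, hW2⟩ := nc_star2 (hNC i) ⟨R i, hR i⟩ y c'
        ({c'} : Set X) (scrRange 𝓡' f \ {c'}) hH1 hH2
    refine ⟨W, hWmem, ?_, ?_⟩
    · intro w hw
      by_cases hwc : w = c'
      · rw [hwc]; exact hW1 c' rfl
      · exact (nc_sto (hNC i) hWmem).trans _ _ _ (hW1 c' rfl) (hW2 w ⟨hw, hwc⟩)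
    · intro w hw
      by_cases hwc : w = c'
      · exact Or.inl hwc.symm
      · exact Or.inr (hW2 w ⟨hw, hwc⟩)
  -- top lemmas
  have ftop : ∀ T : N → Pref X, InDomain 𝓡 T → y ∈ optionSet f i T (𝓡 i) → ∀ W ∈ 𝓡 i,
      (∀ w ∈ scrRange 𝓡' f, W y w) → f (Function.update T i W) = y := by
    intro T hT hyT W hWmem hWtop
    have hupd : InDomain 𝓡 (Function.update T i W) := indomain_update hT hWmem
    have hOeq : optionSet f i (Function.update T i W) (𝓡 i) = optionSet f i T (𝓡 i) :=
      optionSet_congr (fun k hk => Function.update_of_ne hk _ _)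
    rcases step1' _ hupd with h1 | h1
    · rcases lemA hSP hNC hupd i (by rw [hOeq]; exact hyT) with h2 | h2
      · exact h2.symm
      · rw [Function.update_self] at h2
        exact absurd h2 (sto_asymm (nc_sto (hNC i) hWmem) (hWtop _ h1))
    · exact h1
  have ftopc : ∀ T : N → Pref X, InDomain 𝓡 T → y ∉ optionSet f i T (𝓡 i) → ∀ W ∈ 𝓡 i,
      ∀ c' ∈ scrRange 𝓡' f, (∀ w ∈ scrRange 𝓡' f, c' = w ∨ W c' w) →
      f (Function.update T i W) = c' := by
    intro T hT hyT W hWmem c' hc' hWmax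
    have hupd : InDomain 𝓡 (Function.update T i W) := indomain_update hT hWmem
    have hOeq : optionSet f i (Function.update T i W) (𝓡 i) = optionSet f i T (𝓡 i) :=
      optionSet_congr (fun k hk => Function.update_of_ne hk _ _)
    have hfr : f (Function.update T i W) ∈ scrRange 𝓡' f := by
      rcases step1' _ hupd with h1 | h1
      · exact h1
      · exfalso
        apply hyT
        rw [← hOeq, ← h1]
        exact self_mem_optionSet f i _ (by rw [Function.update_self]; exact hWmem)
    have hc'mem : c' ∈ optionSet f i (Function.update T i W) (𝓡 i) := by
      rw [hOeq]; exact hBmem T hT c' hc'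
    rcases lemA hSP hNC hupd i hc'mem with h1 | h1
    · exact h1.symm
    · rw [Function.update_self] at h1
      rcases hWmax _ hfr with h2 | h2
      · exact h2.symm
      · exact absurd h1 (sto_asymm (nc_sto (hNC i) hWmem) h2)
  -- the strategy-proofness comparisons for the pivotal agent j
  have hSPj : ∀ c' ∈ scrRange 𝓡' f, ∀ W ∈ 𝓡 i, (∀ w ∈ scrRange 𝓡' f, W y w) →
      (∀ w ∈ scrRange 𝓡' f, c' = w ∨ W c' w) → ¬ T₁ j c' y ∧ ¬ T₂ j y c' := by
    intro c' hc' W hWmem hWtop hWmax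
    constructor
    · have hsp := hSP (Function.update T₁ i W) (indomain_update hT₁ hWmem) j (T₂ j) (hT₂ j)
      have hcomm : Function.update (Function.update T₁ i W) j (T₂ j) =
          Function.update T₂ i W := by
        funext k
        by_cases hkj : k = j
        · rw [hkj, Function.update_self, Function.update_of_ne hji]
        · rw [Function.update_of_ne hkj]
          by_cases hki : k = i
          · rw [hki, Function.update_self, Function.update_self]
          · rw [Function.update_of_ne hki, Function.update_of_ne hki]
            exact h12 k hkj
      rw [hcomm, ftopc T₂ hT₂ hy2 W hWmem c' hc' hWmax,
        ftop T₁ hT₁ hy1 W hWmem hWtop, Function.update_of_ne hji] at hsp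
      exact hsp
    · have hsp := hSP (Function.update T₂ i W) (indomain_update hT₂ hWmem) j (T₁ j) (hT₁ j)
      have hcomm : Function.update (Function.update T₂ i W) j (T₁ j) =
          Function.update T₁ i W := by
        funext k
        by_cases hkj : k = j
        · rw [hkj, Function.update_self, Function.update_of_ne hji]
        · rw [Function.update_of_ne hkj]
          by_cases hki : k = i
          · rw [hki, Function.update_self, Function.update_self]
          · rw [Function.update_of_ne hki, Function.update_of_ne hki]
            exact (h12 k hkj).symm
      rw [hcomm, ftopc T₂ hT₂ hy2 W hWmem c' hc' hWmax,
        ftop T₁ hT₁ hy1 W hWmem hWtop, Function.update_of_ne hji] at hsp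
      exact hsp
  have hT1sto := nc_sto (hNC j) (hT₁ j)
  have hT2sto := nc_sto (hNC j) (hT₂ j)
  -- the final contradiction, symmetric in the two elements
  have final : ∀ a b : X, a ∈ scrRange 𝓡' f → b ∈ scrRange 𝓡' f → a ≠ b →
      (b, a) ∉ fixedPairs (𝓡 j) → False := by
    intro a b har hbr hab hnba
    obtain ⟨Wa, hWamem, hWatop, hWamax⟩ := hWstar a har
    obtain ⟨Wb, hWbmem, hWbtop, hWbmax⟩ := hWstar b hbr
    obtain ⟨hT1a, hT2a⟩ := hSPj a har Wa hWamem hWatop hWamax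
    obtain ⟨hT1b, hT2b⟩ := hSPj b hbr Wb hWbmem hWbtop hWbmax
    have hay : a ≠ y := fun e => hynr' (e ▸ har)
    have hby : b ≠ y := fun e => hynr' (e ▸ hbr)
    have hT1yb : T₁ j y b := sto_cases hT1sto hby hT1b
    have hT2ay : T₂ j a y := sto_cases hT2sto (Ne.symm hay) hT2a
    have hH1 : ∀ d, (d ∈ ({y} : Set X) ∨ d ∈ ({b} : Set X)) →
        d ≠ a ∧ (d, a) ∉ fixedPairs (𝓡 j) := by
      intro d hd
      rcases hd with hd | hd
      · rw [Set.mem_singleton_iff] at hd; subst hd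
        exact ⟨Ne.symm hay, fun hfp => sto_asymm hT2sto hT2ay (fp_rel hfp (hT₂ j))⟩
      · rw [Set.mem_singleton_iff] at hd; subst hd
        exact ⟨Ne.symm hab, hnba⟩
    have hH2 : ∀ d ∈ ({b} : Set X), d ≠ y ∧ (d, y) ∉ fixedPairs (𝓡 j) := by
      intro d hd
      rw [Set.mem_singleton_iff] at hd; subst hd
      exact ⟨hby, fun hfp => sto_asymm hT1sto hT1yb (fp_rel hfp (hT₁ j))⟩
    obtain ⟨P3, hP3mem, hP31, hP32⟩ := nc_star2 (hNC j) ⟨T₁ j, hT₁ j⟩ a y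
        ({y} : Set X) ({b} : Set X) hH1 hH2
    have hP3ay : P3 a y := hP31 y rfl
    have hP3yb : P3 y b := hP32 b rfl
    have hT₃ : InDomain 𝓡 (Function.update T₁ j P3) := indomain_update hT₁ hP3mem
    have hT₃j : (Function.update T₁ j P3) j = P3 := Function.update_self j P3 T₁
    by_cases hyT₃ : y ∈ optionSet f i (Function.update T₁ j P3) (𝓡 i)
    · have hf₃ : f (Function.update (Function.update T₁ j P3) i Wa) = y :=
        ftop _ hT₃ hyT₃ Wa hWamem hWatop
      have hsp := hSP (Function.update (Function.update T₁ j P3) i Wa)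
        (indomain_update hT₃ hWamem) j (T₂ j) (hT₂ j)
      have hcomm : Function.update (Function.update (Function.update T₁ j P3) i Wa) j (T₂ j) =
          Function.update T₂ i Wa := by
        funext k
        by_cases hkj : k = j
        · rw [hkj, Function.update_self, Function.update_of_ne hji]
        · rw [Function.update_of_ne hkj]
          by_cases hki : k = i
          · rw [hki, Function.update_self, Function.update_self]
          · rw [Function.update_of_ne hki, Function.update_of_ne hki,
              Function.update_of_ne hkj]
            exact h12 k hkj
      rw [hcomm, hf₃, ftopc T₂ hT₂ hy2 Wa hWamem a har hWamax,
        Function.update_of_ne hji, hT₃j] at hsp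
      exact hsp hP3ay
    · have hf₃ : f (Function.update (Function.update T₁ j P3) i Wb) = b :=
        ftopc _ hT₃ hyT₃ Wb hWbmem b hbr hWbmax
      have hsp := hSP (Function.update (Function.update T₁ j P3) i Wb)
        (indomain_update hT₃ hWbmem) j (T₁ j) (hT₁ j)
      have hcomm : Function.update (Function.update (Function.update T₁ j P3) i Wb) j (T₁ j) =
          Function.update T₁ i Wb := by
        funext k
        by_cases hkj : k = j
        · rw [hkj, Function.update_self, Function.update_of_ne hji]
        · rw [Function.update_of_ne hkj]
          by_cases hki : k = i
          · rw [hki, Function.update_self, Function.update_self]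
          · rw [Function.update_of_ne hki, Function.update_of_ne hki,
              Function.update_of_ne hkj]
      rw [hcomm, hf₃, ftop T₁ hT₁ hy1 Wb hWbmem hWbtop,
        Function.update_of_ne hji, hT₃j] at hsp
      exact hsp hP3yb
  by_cases h21 : (c₂, c₁) ∈ fixedPairs (𝓡 j)
  · refine final c₂ c₁ hc₂ hc₁ (Ne.symm hcc) ?_
    intro h12'
    exact fp_asymm (hNC j) ⟨T₁ j, hT₁ j⟩ h21 h12'
  · exact final c₁ c₂ hc₁ hc₂ hcc h21

end S9

theorem statement9 {N X : Type*} [Fintype N] [Nonempty N] [Fintype X] [DecidableEq N]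
    (i : N) (𝓡 𝓡' : N → Set (Pref X))
    (hAgree : ∀ j, j ≠ i → 𝓡' j = 𝓡 j)
    (hNC : ∀ j, NonConditional (𝓡 j)) (hNC' : NonConditional (𝓡' i))
    (hss : 𝓡' i ⊂ 𝓡 i) (x y : X)
    (hxy : (x, y) ∈ fixedPairs (𝓡' i))
    (hS : fixedPairs (𝓡 i) = fixedPairs (𝓡' i) \ {(x, y)})
    (hnoz : ¬ ∃ z, (x, z) ∈ fixedPairs (𝓡' i) ∧ (z, y) ∈ fixedPairs (𝓡' i))
    (f : (N → Pref X) → X) (hSP : StrategyProof 𝓡 f)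
    (hND : NonDictatorial 𝓡 f) (hcard : (scrRange 𝓡 f).ncard ≠ 2)
    (hcard' : 2 ≤ (scrRange 𝓡' f).ncard) :
    ∀ j, ¬ Dictatorship 𝓡' f j := by
  intro j hDict
  by_cases hji : j = i
  · rw [hji] at hDict
    exact S9.caseEq i 𝓡 𝓡' hAgree hNC hNC' x y hxy hS f hSP hND hcard' hDict
  · exact S9.caseNe i j hji 𝓡 𝓡' hAgree hNC hNC' x y hxy hS f hSP hND hcard hcard' hDict
end

section
/- Under the PART 3 setup, consider any subprofile R_{-i} ∈ ∏_{j≠i} 𝓡_j such that O_i(R_{-i}, 𝓡'_i) ≠ O_i(R_{-i}, 𝓡_i). Then for every agent j ≠ i and every preference R̂_j ∈ 𝓡_j, x ∈ O_i((R̂_j, R_{-{i,j}}), 𝓡'_i). -/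
-- every member of a nonconditional domain is a strict total order
lemma mem_sto {X : Type*} {D : Set (Pref X)} (h : NonConditional D) {P : Pref X}
    (hP : P ∈ D) : IsStrictTotalOrder X P := by
  rw [h] at hP; exact hP.1

lemma sto_asymm {X : Type*} {P : Pref X} (h : IsStrictTotalOrder X P) {a b : X}
    (hab : P a b) : ¬ P b a := by
  intro hba
  exact h.irrefl a (h.trans _ _ _ hab hba)

lemma sto_total {X : Type*} {P : Pref X} (h : IsStrictTotalOrder X P) {a b : X}
    (hne : a ≠ b) (hnot : ¬ P b a) : P a b := by
  by_contra h1
  exact hne (h.trichotomous a b h1 hnot)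

/-- Key extension lemma: in a nonempty nonconditional domain, if the pairs
`(b,a)`, `(c,b)`, `(c,a)` are not fixed, there is a member ranking `a > b > c`. -/
lemma extend3 {X : Type*} {D : Set (Pref X)} (hNCd : NonConditional D)
    {P0 : Pref X} (hP0 : P0 ∈ D) {a b c : X}
    (hab : a ≠ b) (hbc : b ≠ c) (hac : a ≠ c)
    (h1 : (b, a) ∉ fixedPairs D) (h2 : (c, b) ∉ fixedPairs D)
    (h3 : (c, a) ∉ fixedPairs D) :
    ∃ P ∈ D, P a b ∧ P b c ∧ P a c := by
  classical
  set T : Set (X × X) := fixedPairs D with hT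
  have hsto0 : IsStrictTotalOrder X P0 := mem_sto hNCd hP0
  have hmemT : ∀ {u v : X}, (u, v) ∈ T → u ≠ v ∧ ∀ P ∈ D, P u v := fun h => h
  have Tasym : ∀ {u v : X}, (u, v) ∈ T → (v, u) ∉ T := by
    intro u v huv hvu
    exact sto_asymm hsto0 (huv.2 P0 hP0) (hvu.2 P0 hP0)
  have Ttrans : ∀ {u v w : X}, (u, v) ∈ T → (v, w) ∈ T → (u, w) ∈ T := by
    intro u v w huv hvw
    have hne : u ≠ w := by
      rintro rfl; exact Tasym huv hvw
    exact ⟨hne, fun P hP => (mem_sto hNCd hP).trans _ _ _ (huv.2 P hP) (hvw.2 P hP)⟩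
  -- T is irreflexive
  have Tirr : ∀ {u : X}, (u, u) ∉ T := fun h => h.1 rfl
  -- down/up sets
  let ga : X → Prop := fun u => u = a ∨ (u, a) ∈ T
  let gb : X → Prop := fun u => u = b ∨ (u, b) ∈ T
  let lb : X → Prop := fun v => v = b ∨ (b, v) ∈ T
  let lc : X → Prop := fun v => v = c ∨ (c, v) ∈ T
  have NB1 : ∀ {v : X}, lb v → ga v → False := by
    rintro v (rfl | hv) (h | h)
    · exact hab h.symm
    · exact h1 h
    · subst h; exact h1 hv
    · exact h1 (Ttrans hv h)
  have NB2 : ∀ {v : X}, lc v → ga v → False := by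
    rintro v (rfl | hv) (h | h)
    · exact hac h.symm
    · exact h3 h
    · subst h; exact h3 hv
    · exact h3 (Ttrans hv h)
  have NB3 : ∀ {v : X}, lc v → gb v → False := by
    rintro v (rfl | hv) (h | h)
    · exact hbc h.symm
    · exact h2 h
    · subst h; exact h2 hv
    · exact h2 (Ttrans hv h)
  have lbT : ∀ {v w : X}, lb v → (v, w) ∈ T → lb w := by
    rintro v w (rfl | hv) hvw
    · exact Or.inr hvw
    · exact Or.inr (Ttrans hv hvw)
  have lcT : ∀ {v w : X}, lc v → (v, w) ∈ T → lc w := by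
    rintro v w (rfl | hv) hvw
    · exact Or.inr hvw
    · exact Or.inr (Ttrans hv hvw)
  have Tga : ∀ {u v : X}, (u, v) ∈ T → ga v → ga u := by
    rintro u v huv (rfl | hv)
    · exact Or.inr huv
    · exact Or.inr (Ttrans huv hv)
  have Tgb : ∀ {u v : X}, (u, v) ∈ T → gb v → gb u := by
    rintro u v huv (rfl | hv)
    · exact Or.inr huv
    · exact Or.inr (Ttrans huv hv)
  have lbgb : ∀ {v : X}, lb v → gb v → v = b := by
    rintro v (rfl | hv) (h | h)
    · rfl
    · rfl
    · exact h
    · exact absurd (Ttrans hv h) Tirr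
  -- the augmented relation
  let T' : X → X → Prop := fun u v =>
    (u, v) ∈ T ∨ (ga u ∧ lb v) ∨ (ga u ∧ lc v) ∨ (gb u ∧ lc v)
  have T'trans : ∀ {u v w : X}, T' u v → T' v w → T' u w := by
    rintro u v w (h | ⟨h1', h2'⟩ | ⟨h1', h2'⟩ | ⟨h1', h2'⟩)
        (g | ⟨g1, g2⟩ | ⟨g1, g2⟩ | ⟨g1, g2⟩)
    · exact Or.inl (Ttrans h g)
    · exact Or.inr (Or.inl ⟨Tga h g1, g2⟩)
    · exact Or.inr (Or.inr (Or.inl ⟨Tga h g1, g2⟩))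
    · exact Or.inr (Or.inr (Or.inr ⟨Tgb h g1, g2⟩))
    · exact Or.inr (Or.inl ⟨h1', lbT h2' g⟩)
    · exact absurd g1 (fun g1 => NB1 h2' g1)
    · exact absurd g1 (fun g1 => NB1 h2' g1)
    · have : v = b := lbgb h2' g1
      exact Or.inr (Or.inr (Or.inl ⟨h1', g2⟩))
    · exact Or.inr (Or.inr (Or.inl ⟨h1', lcT h2' g⟩))
    · exact absurd g1 (fun g1 => NB2 h2' g1)
    · exact absurd g1 (fun g1 => NB2 h2' g1)
    · exact absurd g1 (fun g1 => NB3 h2' g1)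
    · exact Or.inr (Or.inr (Or.inr ⟨h1', lcT h2' g⟩))
    · exact absurd g1 (fun g1 => NB2 h2' g1)
    · exact absurd g1 (fun g1 => NB2 h2' g1)
    · exact absurd g1 (fun g1 => NB3 h2' g1)
  have T'irr : ∀ {u : X}, ¬ T' u u := by
    rintro u (h | ⟨h1', h2'⟩ | ⟨h1', h2'⟩ | ⟨h1', h2'⟩)
    · exact Tirr h
    · exact NB1 h2' h1'
    · exact NB2 h2' h1'
    · exact NB3 h2' h1'
  have T'asym : ∀ {u v : X}, T' u v → ¬ T' v u := fun h g => T'irr (T'trans h g)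
  -- partial order: reflexive closure of T'
  let le : X → X → Prop := fun u v => u = v ∨ T' u v
  have hpo : IsPartialOrder X le := by
    refine { refl := fun u => Or.inl rfl, trans := ?_, antisymm := ?_ }
    · rintro u v w (rfl | h) (rfl | g)
      · exact Or.inl rfl
      · exact Or.inr g
      · exact Or.inr h
      · exact Or.inr (T'trans h g)
    · rintro u v (rfl | h) (g | g)
      · rfl
      · rfl
      · exact g.symm
      · exact absurd g (T'asym h)
  obtain ⟨s, hs, hles⟩ := @extend_partialOrder X le hpo
  haveI : IsLinearOrder X s := hs
  -- the strict part of s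
  refine ⟨fun u v => s u v ∧ u ≠ v, ?_, ?_, ?_, ?_⟩
  · have hsto : IsStrictTotalOrder X (fun u v => s u v ∧ u ≠ v) := by
      refine { trichotomous := ?_, irrefl := ?_, trans := ?_ }
      · -- trichotomous
        intro u v
        by_cases huv : u = v
        · exact fun _ _ => huv
        · rcases total_of s u v with h | h
          · exact fun h1 _ => absurd ⟨h, huv⟩ h1
          · exact fun _ h2 => absurd ⟨h, Ne.symm huv⟩ h2
      · intro u h; exact h.2 rfl
      · rintro u v w ⟨h1', h2'⟩ ⟨g1, g2⟩
        refine ⟨trans_of s h1' g1, ?_⟩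
        rintro rfl
        exact h2' (antisymm_of s h1' g1)
    rw [hNCd]
    refine ⟨hsto, ?_⟩
    intro p hp
    exact ⟨hles _ _ (Or.inr (Or.inl hp)), hp.1⟩
  · exact ⟨hles _ _ (Or.inr (Or.inr (Or.inl ⟨Or.inl rfl, Or.inl rfl⟩))), hab⟩
  · exact ⟨hles _ _ (Or.inr (Or.inr (Or.inr (Or.inr ⟨Or.inl rfl, Or.inl rfl⟩)))), hbc⟩
  · exact ⟨hles _ _ (Or.inr (Or.inr (Or.inr (Or.inl ⟨Or.inl rfl, Or.inl rfl⟩)))), hac⟩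

theorem statement10 {N X : Type*} [Fintype N] [Nonempty N] [Fintype X] [DecidableEq N]
    (i : N) (𝓡 𝓡' : N → Set (Pref X))
    (hAgree : ∀ j, j ≠ i → 𝓡' j = 𝓡 j)
    (hNC : ∀ j, NonConditional (𝓡 j)) (hNC' : NonConditional (𝓡' i))
    (hss : 𝓡' i ⊂ 𝓡 i) (x y : X)
    (hxy : (x, y) ∈ fixedPairs (𝓡' i))
    (hS : fixedPairs (𝓡 i) = fixedPairs (𝓡' i) \ {(x, y)})
    (hnoz : ¬ ∃ z, (x, z) ∈ fixedPairs (𝓡' i) ∧ (z, y) ∈ fixedPairs (𝓡' i))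
    (f : (N → Pref X) → X) (hSP : StrategyProof 𝓡 f)
    (z : X) (hzx : z ≠ x) (hzy : z ≠ y)
    (hrange' : scrRange 𝓡' f = {x, z})
    (hrange : scrRange 𝓡 f = {x, y, z}) :
    ∀ R : N → Pref X, (∀ j, j ≠ i → R j ∈ 𝓡 j) →
      optionSet f i R (𝓡' i) ≠ optionSet f i R (𝓡 i) →
      ∀ j, j ≠ i → ∀ Rhat ∈ 𝓡 j,
        x ∈ optionSet f i (Function.update R j Rhat) (𝓡' i) := by
  classical
  intro R hR hdiff j hj Rhat hRhat
  have hsub : 𝓡' i ⊆ 𝓡 i := hss.1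
  -- a fixed element of 𝓡' i
  obtain ⟨P0', hP0'⟩ : ∃ P', P' ∈ 𝓡' i := by
    have hx : x ∈ scrRange 𝓡' f := by rw [hrange']; exact Set.mem_insert _ _
    obtain ⟨R0, hR0, -⟩ := hx
    exact ⟨R0 i, hR0 i⟩
  have hstoA : ∀ (k : N), ∀ Q ∈ 𝓡 k, IsStrictTotalOrder X Q :=
    fun k Q hQ => mem_sto (hNC k) hQ
  -- domain plumbing
  have hdom : ∀ T : N → Pref X, (∀ k, k ≠ i → T k ∈ 𝓡 k) → ∀ P ∈ 𝓡 i,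
      InDomain 𝓡 (Function.update T i P) := by
    intro T hT P hP k
    by_cases hk : k = i
    · subst hk; rw [Function.update_self]; exact hP
    · rw [Function.update_of_ne hk]; exact hT k hk
  have hdom' : ∀ T : N → Pref X, (∀ k, k ≠ i → T k ∈ 𝓡 k) → ∀ P' ∈ 𝓡' i,
      InDomain 𝓡' (Function.update T i P') := by
    intro T hT P' hP' k
    by_cases hk : k = i
    · subst hk; rw [Function.update_self]; exact hP'
    · rw [Function.update_of_ne hk, hAgree k hk]; exact hT k hk
  -- values of f
  have hval : ∀ T : N → Pref X, (∀ k, k ≠ i → T k ∈ 𝓡 k) → ∀ P ∈ 𝓡 i,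
      f (Function.update T i P) = x ∨ f (Function.update T i P) = y ∨
        f (Function.update T i P) = z := by
    intro T hT P hP
    have hmem : f (Function.update T i P) ∈ scrRange 𝓡 f := ⟨_, hdom T hT P hP, rfl⟩
    rw [hrange] at hmem
    simpa using hmem
  have hval' : ∀ T : N → Pref X, (∀ k, k ≠ i → T k ∈ 𝓡 k) → ∀ P' ∈ 𝓡' i,
      f (Function.update T i P') = x ∨ f (Function.update T i P') = z := by
    intro T hT P' hP'
    have hmem : f (Function.update T i P') ∈ scrRange 𝓡' f := ⟨_, hdom' T hT P' hP', rfl⟩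
    rw [hrange'] at hmem
    simpa using hmem
  -- strategy-proofness for agent i
  have hSPi : ∀ T : N → Pref X, (∀ k, k ≠ i → T k ∈ 𝓡 k) → ∀ P ∈ 𝓡 i, ∀ P2 ∈ 𝓡 i,
      ¬ P2 (f (Function.update T i P)) (f (Function.update T i P2)) := by
    intro T hT P hP P2 hP2
    have h := hSP (Function.update T i P2) (hdom T hT P2 hP2) i P hP
    rwa [Function.update_idem, Function.update_self] at h
  -- strategy-proofness for agent j across columns
  have hSPj : ∀ P ∈ 𝓡 i, ∀ Q1 ∈ 𝓡 j, ∀ Q2 ∈ 𝓡 j,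
      ¬ Q1 (f (Function.update (Function.update R j Q2) i P))
          (f (Function.update (Function.update R j Q1) i P)) := by
    intro P hP Q1 hQ1 Q2 hQ2
    have hT1 : ∀ k, k ≠ i → (Function.update R j Q1) k ∈ 𝓡 k := by
      intro k hk
      by_cases hkj : k = j
      · subst hkj; rw [Function.update_self]; exact hQ1
      · rw [Function.update_of_ne hkj]; exact hR k hk
    have h := hSP (Function.update (Function.update R j Q1) i P)
      (hdom _ hT1 P hP) j Q2 hQ2
    rw [show Function.update (Function.update (Function.update R j Q1) i P) j Q2
        = Function.update (Function.update R j Q2) i P from by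
          rw [Function.update_comm (Ne.symm hj), Function.update_idem]] at h
    rwa [Function.update_of_ne hj, Function.update_self] at h
  -- the key "no opposite pair" lemma
  have noOpp : ∀ T : N → Pref X, (∀ k, k ≠ i → T k ∈ 𝓡 k) → ∀ P0 ∈ 𝓡 i, ∀ u v : X,
      f (Function.update T i P0) = u → (∀ P' ∈ 𝓡' i, f (Function.update T i P') = v) →
      v ≠ u → (v, u) ≠ (x, y) → False := by
    intro T hT P0 hP0 u v hu hv hvu hpair
    have hfix : (v, u) ∈ fixedPairs (𝓡' i) := by
      refine ⟨hvu, ?_⟩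
      intro P' hP'
      have h := hSPi T hT P0 hP0 P' (hsub hP')
      rw [hu, hv P' hP'] at h
      exact sto_total (hstoA i P' (hsub hP')) hvu h
    have hfixS : (v, u) ∈ fixedPairs (𝓡 i) := by
      rw [hS]; exact ⟨hfix, by simpa using hpair⟩
    have h := hSPi T hT P0' (hsub hP0') P0 hP0
    rw [hu, hv P0' hP0'] at h
    exact h (hfixS.2 P0 hP0)
  -- transfer lemmas
  have hxO' : ∀ T : N → Pref X, (∀ k, k ≠ i → T k ∈ 𝓡 k) → ∀ P ∈ 𝓡 i,
      (f (Function.update T i P) = x ∨ f (Function.update T i P) = y) →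
      ∃ P' ∈ 𝓡' i, f (Function.update T i P') = x := by
    intro T hT P hP hu
    by_contra hno
    push_neg at hno
    have hallz : ∀ P' ∈ 𝓡' i, f (Function.update T i P') = z := by
      intro P' hP'
      rcases hval' T hT P' hP' with h | h
      · exact absurd h (hno P' hP')
      · exact h
    rcases hu with h | h
    · exact noOpp T hT P hP x z h hallz hzx
        (by intro hh; injection hh with h1 _; exact hzx h1)
    · exact noOpp T hT P hP y z h hallz hzy
        (by intro hh; injection hh with h1 _; exact hzx h1)
  have hzO' : ∀ T : N → Pref X, (∀ k, k ≠ i → T k ∈ 𝓡 k) → ∀ P ∈ 𝓡 i,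
      f (Function.update T i P) = z → ∃ P' ∈ 𝓡' i, f (Function.update T i P') = z := by
    intro T hT P hP hu
    by_contra hno
    push_neg at hno
    have hallx : ∀ P' ∈ 𝓡' i, f (Function.update T i P') = x := by
      intro P' hP'
      rcases hval' T hT P' hP' with h | h
      · exact h
      · exact absurd h (hno P' hP')
    exact noOpp T hT P hP z x hu hallx (Ne.symm hzx)
      (by intro hh; injection hh with _ h2; exact hzy h2)
  -- set up B
  set B := Function.update R j Rhat with hBdef
  have hBsub : ∀ k, k ≠ i → B k ∈ 𝓡 k := by
    intro k hk
    by_cases hkj : k = j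
    · subst hkj; rw [hBdef, Function.update_self]; exact hRhat
    · rw [hBdef, Function.update_of_ne hkj]; exact hR k hk
  by_contra hgoal
  have hBz : ∀ P' ∈ 𝓡' i, f (Function.update B i P') = z := by
    intro P' hP'
    rcases hval' B hBsub P' hP' with h | h
    · exact absurd ⟨P', hP', h⟩ hgoal
    · exact h
  -- y is in the big option set at R
  obtain ⟨Py0, hPy0, hy0⟩ : ∃ P ∈ 𝓡 i, f (Function.update R i P) = y := by
    obtain ⟨w, hwO, hwO'⟩ : ∃ w, w ∈ optionSet f i R (𝓡 i) ∧ w ∉ optionSet f i R (𝓡' i) := by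
      by_contra hc
      push_neg at hc
      exact hdiff (Set.Subset.antisymm (fun w ⟨P', hP', h⟩ => ⟨P', hsub hP', h⟩) hc)
    obtain ⟨Pw, hPw, hfw⟩ := hwO
    rcases hval R hR Pw hPw with h | h | h
    · obtain ⟨P', hP', hfx⟩ := hxO' R hR Pw hPw (Or.inl h)
      exact absurd ⟨P', hP', by rw [hfx, ← hfw, h]⟩ hwO'
    · exact ⟨Pw, hPw, h⟩
    · obtain ⟨P', hP', hfz⟩ := hzO' R hR Pw hPw h
      exact absurd ⟨P', hP', by rw [hfz, ← hfw, h]⟩ hwO'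
  -- x is in the small option set at R
  obtain ⟨Px, hPx, hfPx⟩ := hxO' R hR Py0 hPy0 (Or.inr hy0)
  -- option set at B is {z}
  have hBzAll : ∀ P ∈ 𝓡 i, f (Function.update B i P) = z := by
    intro P hP
    rcases hval B hBsub P hP with h | h | h
    · obtain ⟨P', hP', h'⟩ := hxO' B hBsub P hP (Or.inl h)
      rw [hBz P' hP'] at h'
      exact absurd h' hzx
    · obtain ⟨P', hP', h'⟩ := hxO' B hBsub P hP (Or.inr h)
      rw [hBz P' hP'] at h'
      exact absurd h' hzx
    · exact h
  -- facts about agent j's preferences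
  have hRj : R j ∈ 𝓡 j := hR j hj
  have hupdR : Function.update R j (R j) = R := Function.update_eq_self j R
  have hAxz : (R j) x z := by
    have h := hSPj Px (hsub hPx) (R j) hRj Rhat hRhat
    rw [hupdR, hfPx, ← hBdef, hBz Px hPx] at h
    exact sto_total (hstoA j (R j) hRj) (Ne.symm hzx) h
  have hAyz : (R j) y z := by
    have h := hSPj Py0 hPy0 (R j) hRj Rhat hRhat
    rw [hupdR, hy0, ← hBdef, hBzAll Py0 hPy0] at h
    exact sto_total (hstoA j (R j) hRj) (Ne.symm hzy) h
  have hRhzx : Rhat z x := by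
    have h := hSPj Px (hsub hPx) Rhat hRhat (R j) hRj
    rw [hupdR, hfPx, ← hBdef, hBz Px hPx] at h
    exact sto_total (hstoA j Rhat hRhat) hzx h
  have hRhzy : Rhat z y := by
    have h := hSPj Py0 hPy0 Rhat hRhat (R j) hRj
    rw [hupdR, hy0, ← hBdef, hBzAll Py0 hPy0] at h
    exact sto_total (hstoA j Rhat hRhat) hzy h
  -- non-fixed pairs in agent j's domain
  have hnfzx : (z, x) ∉ fixedPairs (𝓡 j) :=
    fun hm => sto_asymm (hstoA j (R j) hRj) hAxz (hm.2 (R j) hRj)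
  have hnfzy : (z, y) ∉ fixedPairs (𝓡 j) :=
    fun hm => sto_asymm (hstoA j (R j) hRj) hAyz (hm.2 (R j) hRj)
  have hnfxz : (x, z) ∉ fixedPairs (𝓡 j) :=
    fun hm => sto_asymm (hstoA j Rhat hRhat) hRhzx (hm.2 Rhat hRhat)
  have hnfyz : (y, z) ∉ fixedPairs (𝓡 j) :=
    fun hm => sto_asymm (hstoA j Rhat hRhat) hRhzy (hm.2 Rhat hRhat)
  by_cases hxyj : (x, y) ∈ fixedPairs (𝓡 j)
  · -- case (x,y) ∈ S_j
    have hAxy : (R j) x y := hxyj.2 (R j) hRj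
    have hnfyx : (y, x) ∉ fixedPairs (𝓡 j) :=
      fun hm => sto_asymm (hstoA j (R j) hRj) hAxy (hm.2 (R j) hRj)
    obtain ⟨Qj, hQj, hQxz, hQzy, hQxy⟩ :=
      extend3 (hNC j) hRj (Ne.symm hzx) hzy hxy.1 hnfzx hnfyz hnfyx
    set D := Function.update R j Qj with hDdef
    have hDsub : ∀ k, k ≠ i → D k ∈ 𝓡 k := by
      intro k hk
      by_cases hkj : k = j
      · subst hkj; rw [hDdef, Function.update_self]; exact hQj
      · rw [hDdef, Function.update_of_ne hkj]; exact hR k hk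
    have hDny : ∀ P ∈ 𝓡 i, f (Function.update D i P) ≠ y := by
      intro P hP hyD
      have h := hSPj P hP Qj hQj Rhat hRhat
      rw [← hBdef, ← hDdef, hyD, hBzAll P hP] at h
      exact h hQzy
    have hDx : ∀ P' ∈ 𝓡' i, f (Function.update R i P') = x →
        f (Function.update D i P') = x := by
      intro P' hP' hfA
      have h := hSPj P' (hsub hP') Qj hQj (R j) hRj
      rw [hupdR, ← hDdef, hfA] at h
      rcases hval' D hDsub P' hP' with hc | hc
      · exact hc
      · rw [hc] at h; exact absurd hQxz h
    have hDz : ∀ P ∈ 𝓡 i, f (Function.update R i P) = y →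
        f (Function.update D i P) = z := by
      intro P hP hfA
      have h := hSPj P hP (R j) hRj Qj hQj
      rw [hupdR, ← hDdef, hfA] at h
      rcases hval D hDsub P hP with hc | hc | hc
      · rw [hc] at h; exact absurd hAxy h
      · exact absurd hc (hDny P hP)
      · exact hc
    by_cases hxzS : (x, z) ∈ fixedPairs (𝓡' i)
    · -- (x,z) fixed in 𝓡' i, hence in 𝓡 i
      have hxzSS : (x, z) ∈ fixedPairs (𝓡 i) := by
        rw [hS]
        refine ⟨hxzS, ?_⟩
        simp only [Set.mem_singleton_iff]
        intro hh; injection hh with _ h2; exact hzy h2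
      have h := hSPi D hDsub Px (hsub hPx) Py0 hPy0
      rw [hDx Px hPx hfPx, hDz Py0 hPy0 hy0] at h
      exact h (hxzSS.2 Py0 hPy0)
    · -- (x,z) not fixed: get P' ∈ 𝓡' i with P' z x
      obtain ⟨P', hP', hP'zx⟩ : ∃ P' ∈ 𝓡' i, P' z x := by
        by_contra hc
        push_neg at hc
        exact hxzS ⟨Ne.symm hzx, fun P' hP' =>
          sto_total (hstoA i P' (hsub hP')) (Ne.symm hzx) (hc P' hP')⟩
      rcases hval' R hR P' hP' with hvx | hvz
      · have h := hSPi D hDsub Py0 hPy0 P' (hsub hP')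
        rw [hDz Py0 hPy0 hy0, hDx P' hP' hvx] at h
        exact h hP'zx
      · have hzxS : (z, x) ∉ fixedPairs (𝓡 i) := by
          intro hm
          have h := hSPi R hR P' (hsub hP') Px (hsub hPx)
          rw [hvz, hfPx] at h
          exact h (hm.2 Px (hsub hPx))
        have hzyS : (z, y) ∉ fixedPairs (𝓡 i) := by
          intro hm
          have h := hSPi R hR P' (hsub hP') Py0 hPy0
          rw [hvz, hy0] at h
          exact h (hm.2 Py0 hPy0)
        have hxyS : (x, y) ∉ fixedPairs (𝓡 i) := by
          rw [hS]; rintro ⟨-, hne⟩; exact hne rfl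
        obtain ⟨Pst, hPst, hPyx, hPxz2, hPyz⟩ :=
          extend3 (hNC i) (hsub hP0') (fun h => hxy.1 h.symm) (Ne.symm hzx)
            (Ne.symm hzy) hxyS hzxS hzyS
        have hfst : f (Function.update R i Pst) = y := by
          have h := hSPi R hR Py0 hPy0 Pst hPst
          rw [hy0] at h
          rcases hval R hR Pst hPst with hc | hc | hc
          · rw [hc] at h; exact absurd hPyx h
          · exact hc
          · rw [hc] at h; exact absurd hPyz h
        have h := hSPi D hDsub Px (hsub hPx) Pst hPst
        rw [hDx Px hPx hfPx, hDz Pst hPst hfst] at h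
        exact h hPxz2
  · -- case (x,y) ∉ S_j
    obtain ⟨Qj, hQj, hQyz, hQzx, hQyx⟩ :=
      extend3 (hNC j) hRj (Ne.symm hzy) hzx (fun h => hxy.1 h.symm) hnfzy hnfxz hxyj
    set C := Function.update R j Qj with hCdef
    have hCsub : ∀ k, k ≠ i → C k ∈ 𝓡 k := by
      intro k hk
      by_cases hkj : k = j
      · subst hkj; rw [hCdef, Function.update_self]; exact hQj
      · rw [hCdef, Function.update_of_ne hkj]; exact hR k hk
    have hyC : f (Function.update C i Py0) = y := by
      have h := hSPj Py0 hPy0 Qj hQj (R j) hRj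
      rw [hupdR, ← hCdef, hy0] at h
      rcases hval C hCsub Py0 hPy0 with hc | hc | hc
      · rw [hc] at h; exact absurd hQyx h
      · exact hc
      · rw [hc] at h; exact absurd hQyz h
    obtain ⟨P'', hP'', hfP''⟩ := hxO' C hCsub Py0 hPy0 (Or.inr hyC)
    have h := hSPj P'' (hsub hP'') Qj hQj Rhat hRhat
    rw [← hBdef, ← hCdef, hfP'', hBz P'' hP''] at h
    exact h hQzx
end

section
/- Under the PART 3 setup, let R_{-i} ∈ ∏_{j≠i} 𝓡_j be a subprofile such that O_i(R_{-i}, 𝓡'_i) ≠ O_i(R_{-i}, 𝓡_i). Suppose there exist an agent j ≠ i and preferences R̂_j, R'_j, R''_j ∈ 𝓡_j such that O_i((R̂_j, R_{-{i,j}}), 𝓡'_i) = {x, z}, R'_j and R''_j are adjacent with respect to {x, y, z}, O_i((R'_j, R_{-{i,j}}), 𝓡'_i) = r(f'), and O_i((R'_j, R_{-{i,j}}), 𝓡_i) = r(f). Then O_i((R''_j, R_{-{i,j}}), 𝓡'_i) = r(f') and O_i((R''_j, R_{-{i,j}}), 𝓡_i) = r(f). -/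
/-- Two preferences are adjacent with respect to `{x, y, z}`: they disagree on
exactly one pair of distinct alternatives of `{x, y, z}` and agree on all the
other pairs of `{x, y, z}`. -/
def AdjacentOn {X : Type*} (P P' : Pref X) (x y z : X) : Prop :=
  ∃ v ∈ ({x, y, z} : Set X), ∃ w ∈ ({x, y, z} : Set X), v ≠ w ∧ P v w ∧ P' w v ∧
    ∀ s ∈ ({x, y, z} : Set X), ∀ t ∈ ({x, y, z} : Set X), s ≠ t →
      ({s, t} : Set X) ≠ {v, w} → (P s t ↔ P' s t)


section Aux13

variable {X : Type*}

private lemma sto_asymm13 {P : Pref X} (h : IsStrictTotalOrder X P) {a b : X}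
    (h1 : P a b) : ¬ P b a := fun h2 => h.irrefl a (h.trans _ _ _ h1 h2)

private lemma nc_mem_sto13 {B : Set (Pref X)} (hB : NonConditional B) {P : Pref X}
    (hP : P ∈ B) : IsStrictTotalOrder X P := by
  rw [hB] at hP; exact hP.1

private lemma extend_strict13 (r : X → X → Prop)
    (hirr : ∀ s, ¬ r s s) (htrans : ∀ s t u, r s t → r t u → r s u) :
    ∃ P : Pref X, IsStrictTotalOrder X P ∧ ∀ s t, r s t → P s t := by
  let r' : X → X → Prop := fun s t => r s t ∨ s = t
  haveI : IsPartialOrder X r' :=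
    { refl := fun s => Or.inr rfl
      trans := by
        rintro s t u (h | rfl) h'
        · rcases h' with h' | rfl
          · exact Or.inl (htrans _ _ _ h h')
          · exact Or.inl h
        · exact h'
      antisymm := by
        rintro s t (h | rfl) h'
        · rcases h' with h' | rfl
          · exact absurd (htrans _ _ _ h h') (hirr s)
          · rfl
        · rfl }
  obtain ⟨s, hlin, hle⟩ := extend_partialOrder r'
  have hles : ∀ {u v : X}, r' u v → s u v := fun {u v} h => hle u v h
  refine ⟨fun u v => s u v ∧ u ≠ v, ?_, fun u v h =>
    ⟨hles (Or.inl h), by rintro rfl; exact hirr u h⟩⟩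
  haveI htri : IsTrichotomous X (fun u v => s u v ∧ u ≠ v) := by
    constructor
    intro u v h1' h2'
    by_contra huv
    rcases hlin.total u v with h | h
    · exact h1' ⟨h, huv⟩
    · exact h2' ⟨h, Ne.symm huv⟩
  haveI hirr2 : IsIrrefl X (fun u v => s u v ∧ u ≠ v) := ⟨fun u h => h.2 rfl⟩
  haveI htrs : IsTrans X (fun u v => s u v ∧ u ≠ v) := by
    constructor
    intro u v w h h'
    refine ⟨hlin.trans _ _ _ h.1 h'.1, ?_⟩
    rintro rfl
    exact h.2 (hlin.antisymm _ _ h.1 h'.1)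
  haveI : IsStrictOrder X (fun u v => s u v ∧ u ≠ v) := ⟨⟩
  exact ⟨⟩

/-- the `{a,b,c}`-part of the order we want to impose: `a > b > c`. -/
private def chainL13 (a b c s t : X) : Prop :=
  (s = a ∧ t = b) ∨ (s = b ∧ t = c) ∨ (s = a ∧ t = c)

private lemma exists_chain13 {B : Set (Pref X)} (hB : NonConditional B)
    {P0 : Pref X} (hP0 : P0 ∈ B) {a b c : X} (hab : a ≠ b) (hbc : b ≠ c) (hac : a ≠ c)
    (h1 : (b, a) ∉ fixedPairs B) (h2 : (c, b) ∉ fixedPairs B) (h3 : (c, a) ∉ fixedPairs B) :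
    ∃ P ∈ B, P a b ∧ P b c ∧ P a c := by
  have hP0sto := nc_mem_sto13 hB hP0
  have hTP0 : ∀ {s t : X}, (s, t) ∈ fixedPairs B → P0 s t := fun h => h.2 P0 hP0
  have hTtrans : ∀ {s t u : X}, (s, t) ∈ fixedPairs B → (t, u) ∈ fixedPairs B →
      (s, u) ∈ fixedPairs B := by
    intro s t u h h'
    refine ⟨fun he => ?_, fun P hP => (nc_mem_sto13 hB hP).trans _ _ _ (h.2 P hP) (h'.2 P hP)⟩
    have he' : s = u := he
    have h'' : (t, s) ∈ fixedPairs B := by rw [he']; exact h'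
    exact sto_asymm13 hP0sto (hTP0 h) (hTP0 h'')
  have hTL : ∀ {s t : X}, (s, t) ∈ fixedPairs B → (s = a ∨ s = b ∨ s = c) →
      (t = a ∨ t = b ∨ t = c) → chainL13 a b c s t := by
    rintro s t h (rfl | rfl | rfl) (rfl | rfl | rfl)
    · exact absurd rfl h.1
    · exact Or.inl ⟨rfl, rfl⟩
    · exact Or.inr (Or.inr ⟨rfl, rfl⟩)
    · exact absurd h h1
    · exact absurd rfl h.1
    · exact Or.inr (Or.inl ⟨rfl, rfl⟩)
    · exact absurd h h3
    · exact absurd h h2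
    · exact absurd rfl h.1
  have hLmem : ∀ {s t : X}, chainL13 a b c s t →
      (s = a ∨ s = b ∨ s = c) ∧ (t = a ∨ t = b ∨ t = c) := by
    rintro s t (⟨rfl, rfl⟩ | ⟨rfl, rfl⟩ | ⟨rfl, rfl⟩) <;> simp
  have hLne : ∀ {s t : X}, chainL13 a b c s t → s ≠ t := by
    rintro s t (⟨rfl, rfl⟩ | ⟨rfl, rfl⟩ | ⟨rfl, rfl⟩) <;> assumption
  have hLasym : ∀ {s t : X}, chainL13 a b c s t → ¬ chainL13 a b c t s := by
    rintro s t (⟨rfl, rfl⟩ | ⟨rfl, rfl⟩ | ⟨rfl, rfl⟩) (⟨h, h'⟩ | ⟨h, h'⟩ | ⟨h, h'⟩) <;>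
      first
        | exact hab h'
        | exact hac h'
        | exact hbc h'
        | exact hab h.symm
        | exact hbc h.symm
        | exact hac h.symm
        | exact hab h'.symm
        | exact hbc h'.symm
        | exact hac h'.symm
  have hLtrans : ∀ {s t u : X}, chainL13 a b c s t → chainL13 a b c t u →
      chainL13 a b c s u := by
    rintro s t u (⟨rfl, rfl⟩ | ⟨rfl, rfl⟩ | ⟨rfl, rfl⟩) (⟨h, rfl⟩ | ⟨h, rfl⟩ | ⟨h, rfl⟩) <;>
      first
        | exact Or.inl ⟨rfl, rfl⟩
        | exact Or.inr (Or.inl ⟨rfl, rfl⟩)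
        | exact Or.inr (Or.inr ⟨rfl, rfl⟩)
        | exact absurd h.symm hab
        | exact absurd h.symm hbc
        | exact absurd h.symm hac
        | exact absurd h hab
        | exact absurd h hbc
        | exact absurd h hac
  set r : X → X → Prop := fun s t => (s, t) ∈ fixedPairs B ∨
    ∃ u v, chainL13 a b c u v ∧ (s = u ∨ (s, u) ∈ fixedPairs B) ∧
      (t = v ∨ (v, t) ∈ fixedPairs B) with hrdef
  have hrirr : ∀ s, ¬ r s s := by
    rintro s (h | ⟨u, v, hL, hsu, hvs⟩)
    · exact h.1 rfl
    · have hvu : (v, u) ∈ fixedPairs B := by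
        rcases hsu with rfl | hsu
        · rcases hvs with rfl | hvs
          · exact absurd rfl (hLne hL)
          · exact hvs
        · rcases hvs with rfl | hvs
          · exact hsu
          · exact hTtrans hvs hsu
      exact hLasym hL (hTL hvu (hLmem hL).2 (hLmem hL).1)
  have hrtrans : ∀ s t u, r s t → r t u → r s u := by
    intro s t u h h'
    rcases h with h | ⟨u1, v1, hL1, hs1, ht1⟩
    · rcases h' with h' | ⟨u2, v2, hL2, ht2, hu2⟩
      · exact Or.inl (hTtrans h h')
      · refine Or.inr ⟨u2, v2, hL2, ?_, hu2⟩
        rcases ht2 with rfl | ht2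
        · exact Or.inr h
        · exact Or.inr (hTtrans h ht2)
    · rcases h' with h' | ⟨u2, v2, hL2, ht2, hu2⟩
      · refine Or.inr ⟨u1, v1, hL1, hs1, ?_⟩
        rcases ht1 with rfl | ht1
        · exact Or.inr h'
        · exact Or.inr (hTtrans ht1 h')
      · have hmid : v1 = u2 ∨ (v1, u2) ∈ fixedPairs B := by
          rcases ht1 with rfl | ht1
          · exact ht2
          · rcases ht2 with rfl | ht2
            · exact Or.inr ht1
            · exact Or.inr (hTtrans ht1 ht2)
        rcases hmid with rfl | hmid
        · exact Or.inr ⟨u1, v2, hLtrans hL1 hL2, hs1, hu2⟩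
        · have hL3 : chainL13 a b c v1 u2 := hTL hmid (hLmem hL1).2 (hLmem hL2).1
          exact Or.inr ⟨u1, v2, hLtrans (hLtrans hL1 hL3) hL2, hs1, hu2⟩
  obtain ⟨P, hPsto, hrP⟩ := extend_strict13 r hrirr hrtrans
  have hLr : ∀ {s t : X}, chainL13 a b c s t → r s t :=
    fun h => Or.inr ⟨_, _, h, Or.inl rfl, Or.inl rfl⟩
  refine ⟨P, ?_, hrP _ _ (hLr (Or.inl ⟨rfl, rfl⟩)),
    hrP _ _ (hLr (Or.inr (Or.inl ⟨rfl, rfl⟩))),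
    hrP _ _ (hLr (Or.inr (Or.inr ⟨rfl, rfl⟩)))⟩
  rw [hB]
  exact ⟨hPsto, fun p hp => hrP _ _ (Or.inl hp)⟩

end Aux13

theorem statement13 {N X : Type*} [Fintype N] [Nonempty N] [Fintype X] [DecidableEq N]
    (i : N) (𝓡 𝓡' : N → Set (Pref X))
    (hAgree : ∀ j, j ≠ i → 𝓡' j = 𝓡 j)
    (hNC : ∀ j, NonConditional (𝓡 j)) (hNC' : NonConditional (𝓡' i))
    (hss : 𝓡' i ⊂ 𝓡 i) (x y : X)
    (hxy : (x, y) ∈ fixedPairs (𝓡' i))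
    (hS : fixedPairs (𝓡 i) = fixedPairs (𝓡' i) \ {(x, y)})
    (hnoz : ¬ ∃ z, (x, z) ∈ fixedPairs (𝓡' i) ∧ (z, y) ∈ fixedPairs (𝓡' i))
    (f : (N → Pref X) → X) (hSP : StrategyProof 𝓡 f)
    (z : X) (hzx : z ≠ x) (hzy : z ≠ y)
    (hrange' : scrRange 𝓡' f = {x, z})
    (hrange : scrRange 𝓡 f = {x, y, z}) :
    ∀ R : N → Pref X, (∀ j, j ≠ i → R j ∈ 𝓡 j) →
      optionSet f i R (𝓡' i) ≠ optionSet f i R (𝓡 i) →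
      ∀ j, j ≠ i → ∀ Rhat ∈ 𝓡 j, ∀ R1 ∈ 𝓡 j, ∀ R2 ∈ 𝓡 j,
        optionSet f i (Function.update R j Rhat) (𝓡' i) = {x, z} →
        AdjacentOn R1 R2 x y z →
        optionSet f i (Function.update R j R1) (𝓡' i) = scrRange 𝓡' f →
        optionSet f i (Function.update R j R1) (𝓡 i) = scrRange 𝓡 f →
        optionSet f i (Function.update R j R2) (𝓡' i) = scrRange 𝓡' f ∧
          optionSet f i (Function.update R j R2) (𝓡 i) = scrRange 𝓡 f := by
  intro R hR _hne j hj Rhat hRhat R1 hR1 R2 hR2 _hhat hadj hA1 hB1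
  obtain ⟨v, hvmem, w, hwmem, hvw, hR1vw, hR2wv, hoth⟩ := hadj
  have hji : j ≠ i := hj
  have hxy' : x ≠ y := hxy.1
  -- profiles obtained from the subprofiles lie in the respective domains
  have hdom : ∀ Rk ∈ 𝓡 j, ∀ P ∈ 𝓡 i,
      InDomain 𝓡 (Function.update (Function.update R j Rk) i P) := by
    intro Rk hRk P hP k
    rcases eq_or_ne k i with rfl | hki
    · rwa [Function.update_self]
    · rw [Function.update_of_ne hki]
      rcases eq_or_ne k j with rfl | hkj
      · rwa [Function.update_self]
      · rw [Function.update_of_ne hkj]; exact hR k hki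
  have hdom' : ∀ Rk ∈ 𝓡 j, ∀ P ∈ 𝓡' i,
      InDomain 𝓡' (Function.update (Function.update R j Rk) i P) := by
    intro Rk hRk P hP k
    rcases eq_or_ne k i with rfl | hki
    · rwa [Function.update_self]
    · rw [Function.update_of_ne hki, hAgree k hki]
      rcases eq_or_ne k j with rfl | hkj
      · rwa [Function.update_self]
      · rw [Function.update_of_ne hkj]; exact hR k hki
  have hmem3 : ∀ Rk ∈ 𝓡 j, ∀ P ∈ 𝓡 i,
      f (Function.update (Function.update R j Rk) i P) ∈ ({x, y, z} : Set X) := by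
    intro Rk hRk P hP
    rw [← hrange]; exact ⟨_, hdom Rk hRk P hP, rfl⟩
  have hmem2 : ∀ Rk ∈ 𝓡 j, ∀ P ∈ 𝓡' i,
      f (Function.update (Function.update R j Rk) i P) ∈ ({x, z} : Set X) := by
    intro Rk hRk P hP
    rw [← hrange']; exact ⟨_, hdom' Rk hRk P hP, rfl⟩
  -- maximality of the outcome over the option set (strategy-proofness for i)
  have hmax : ∀ Rk ∈ 𝓡 j, ∀ P ∈ 𝓡 i, ∀ a ∈ optionSet f i (Function.update R j Rk) (𝓡 i),
      ¬ P a (f (Function.update (Function.update R j Rk) i P)) := by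
    intro Rk hRk P hP a ha
    obtain ⟨P'', hP'', hfa⟩ := ha
    have h := hSP _ (hdom Rk hRk P hP) i P'' hP''
    rwa [Function.update_idem, hfa, Function.update_self] at h
  have htopf : ∀ Rk ∈ 𝓡 j, optionSet f i (Function.update R j Rk) (𝓡 i) = {x, y, z} →
      ∀ P ∈ 𝓡 i, ∀ t ∈ ({x, y, z} : Set X),
      (∀ u ∈ ({x, y, z} : Set X), u ≠ t → P t u) →
      f (Function.update (Function.update R j Rk) i P) = t := by
    intro Rk hRk hopt P hP t ht htu
    by_contra hne
    exact hmax Rk hRk P hP t (by rw [hopt]; exact ht)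
      (htu _ (hmem3 Rk hRk P hP) hne)
  have hB1' : optionSet f i (Function.update R j R1) (𝓡 i) = {x, y, z} := by
    rw [hB1, hrange]
  have hA1' : optionSet f i (Function.update R j R1) (𝓡' i) = {x, z} := by
    rw [hA1, hrange']
  -- witnesses from the option sets at R1, giving the needed non-fixed pairs
  obtain ⟨Pz, hPz, hfPz⟩ : z ∈ optionSet f i (Function.update R j R1) (𝓡' i) := by
    rw [hA1']; simp
  have hPzi : Pz ∈ 𝓡 i := hss.subset hPz
  have hnPxz : ¬ Pz x z := by
    have h := hmax R1 hR1 Pz hPzi x (by rw [hB1']; simp)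
    rwa [hfPz] at h
  have hnPyz : ¬ Pz y z := by
    have h := hmax R1 hR1 Pz hPzi y (by rw [hB1']; simp)
    rwa [hfPz] at h
  have hxz_not : (x, z) ∉ fixedPairs (𝓡' i) := fun h => hnPxz (h.2 Pz hPz)
  have hyz_not : (y, z) ∉ fixedPairs (𝓡' i) := fun h => hnPyz (h.2 Pz hPz)
  obtain ⟨Px, hPx, hfPx⟩ : x ∈ optionSet f i (Function.update R j R1) (𝓡' i) := by
    rw [hA1']; simp
  have hPxi : Px ∈ 𝓡 i := hss.subset hPx
  have hnPzx : ¬ Px z x := by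
    have h := hmax R1 hR1 Px hPxi z (by rw [hB1']; simp)
    rwa [hfPx] at h
  have hnPyx : ¬ Px y x := by
    have h := hmax R1 hR1 Px hPxi y (by rw [hB1']; simp)
    rwa [hfPx] at h
  have hzx_not : (z, x) ∉ fixedPairs (𝓡' i) := fun h => hnPzx (h.2 Px hPx)
  have hyx_not : (y, x) ∉ fixedPairs (𝓡' i) := fun h => hnPyx (h.2 Px hPx)
  obtain ⟨Qy, hQy, hfQy⟩ : y ∈ optionSet f i (Function.update R j R1) (𝓡 i) := by
    rw [hB1']; simp
  have hnQzy : ¬ Qy z y := by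
    have h := hmax R1 hR1 Qy hQy z (by rw [hB1']; simp)
    rwa [hfQy] at h
  have hzy_not : (z, y) ∉ fixedPairs (𝓡' i) := by
    intro h
    have hmemS : (z, y) ∈ fixedPairs (𝓡 i) := by
      rw [hS]
      exact ⟨h, fun hmem => hzx (congrArg Prod.fst hmem)⟩
    exact hnQzy (hmemS.2 Qy hQy)
  have hSsub : fixedPairs (𝓡 i) ⊆ fixedPairs (𝓡' i) := by
    rw [hS]; exact Set.diff_subset
  have hxz_notS : (x, z) ∉ fixedPairs (𝓡 i) := fun h => hxz_not (hSsub h)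
  have hzx_notS : (z, x) ∉ fixedPairs (𝓡 i) := fun h => hzx_not (hSsub h)
  have hyz_notS : (y, z) ∉ fixedPairs (𝓡 i) := fun h => hyz_not (hSsub h)
  have hyx_notS : (y, x) ∉ fixedPairs (𝓡 i) := fun h => hyx_not (hSsub h)
  have hzy_notS : (z, y) ∉ fixedPairs (𝓡 i) := fun h => hzy_not (hSsub h)
  have hxy_notS : (x, y) ∉ fixedPairs (𝓡 i) := by
    rw [hS]; rintro ⟨-, h⟩; exact h rfl
  -- the required preference chains
  obtain ⟨Pxyz, hPxyz, hPxyz1, hPxyz2, hPxyz3⟩ :=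
    exists_chain13 hNC' hPz hxy' (Ne.symm hzy) (Ne.symm hzx) hyx_not hzy_not hzx_not
  obtain ⟨Pzxy, hPzxy, hPzxy1, hPzxy2, hPzxy3⟩ :=
    exists_chain13 hNC' hPz hzx hxy' hzy hxz_not hyx_not hyz_not
  obtain ⟨Qyxz, hQyxz, hQyxz1, hQyxz2, hQyxz3⟩ :=
    exists_chain13 (hNC i) hPzi (Ne.symm hxy') (Ne.symm hzx) (Ne.symm hzy)
      hxy_notS hzx_notS hzy_notS
  obtain ⟨Qyzx, hQyzx, hQyzx1, hQyzx2, hQyzx3⟩ :=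
    exists_chain13 (hNC i) hPzi (Ne.symm hzy) hzx (Ne.symm hxy')
      hzy_notS hxz_notS hxy_notS
  obtain ⟨Qzyx, hQzyx, hQzyx1, hQzyx2, hQzyx3⟩ :=
    exists_chain13 (hNC i) hPzi hzy (Ne.symm hxy') hzx
      hyz_notS hxy_notS hxz_notS
  -- strategy-proofness for agent j: swapping R1 to R2 moves the outcome only from v to w
  have hupd12 : ∀ P : Pref X,
      Function.update (Function.update (Function.update R j R1) i P) j R2
        = Function.update (Function.update R j R2) i P := by
    intro P
    rw [Function.update_comm (Ne.symm hji), Function.update_idem]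
  have hupd21 : ∀ P : Pref X,
      Function.update (Function.update (Function.update R j R2) i P) j R1
        = Function.update (Function.update R j R1) i P := by
    intro P
    rw [Function.update_comm (Ne.symm hji), Function.update_idem]
  have hatj1 : ∀ P : Pref X, (Function.update (Function.update R j R1) i P) j = R1 := by
    intro P; rw [Function.update_of_ne hji, Function.update_self]
  have hatj2 : ∀ P : Pref X, (Function.update (Function.update R j R2) i P) j = R2 := by
    intro P; rw [Function.update_of_ne hji, Function.update_self]
  have R1sto := nc_mem_sto13 (hNC j) hR1
  have R2sto := nc_mem_sto13 (hNC j) hR2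
  have hswap : ∀ P ∈ 𝓡 i,
      f (Function.update (Function.update R j R2) i P)
        = f (Function.update (Function.update R j R1) i P) ∨
      (f (Function.update (Function.update R j R1) i P) = v ∧
        f (Function.update (Function.update R j R2) i P) = w) := by
    intro P hP
    rcases eq_or_ne (f (Function.update (Function.update R j R2) i P))
      (f (Function.update (Function.update R j R1) i P)) with h | hba
    · exact Or.inl h
    have ha3 := hmem3 R1 hR1 P hP
    have hb3 := hmem3 R2 hR2 P hP
    have h1 := hSP _ (hdom R1 hR1 P hP) j R2 hR2
    rw [hupd12 P, hatj1 P] at h1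
    have h2 := hSP _ (hdom R2 hR2 P hP) j R1 hR1
    rw [hupd21 P, hatj2 P] at h2
    have hR1ab : R1 (f (Function.update (Function.update R j R1) i P))
        (f (Function.update (Function.update R j R2) i P)) := by
      by_contra hn
      exact hba (R1sto.trichotomous _ _ hn h1).symm
    have hR2ba : R2 (f (Function.update (Function.update R j R2) i P))
        (f (Function.update (Function.update R j R1) i P)) := by
      by_contra hn
      exact hba (R2sto.trichotomous _ _ hn h2)
    by_cases hset : ({f (Function.update (Function.update R j R1) i P),
        f (Function.update (Function.update R j R2) i P)} : Set X) = ({v, w} : Set X)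
    · have hav : f (Function.update (Function.update R j R1) i P) = v ∨
          f (Function.update (Function.update R j R1) i P) = w := by
        have h := hset ▸ Set.mem_insert (f (Function.update (Function.update R j R1) i P))
          {f (Function.update (Function.update R j R2) i P)}
        simpa using h
      have hbv : f (Function.update (Function.update R j R2) i P) = v ∨
          f (Function.update (Function.update R j R2) i P) = w := by
        have h : f (Function.update (Function.update R j R2) i P) ∈ ({v, w} : Set X) := by
          rw [← hset]; simp
        simpa using h
      rcases hav with h | h
      · rcases hbv with h' | h'
        · exact absurd (h'.trans h.symm) hba
        · exact Or.inr ⟨h, h'⟩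
      · rcases hbv with h' | h'
        · rw [h, h'] at hR1ab
          exact (sto_asymm13 R1sto hR1vw hR1ab).elim
        · exact absurd (h'.trans h.symm) hba
    · have hiff := hoth _ ha3 _ hb3 (Ne.symm hba) hset
      exact (sto_asymm13 R2sto hR2ba (hiff.mp hR1ab)).elim
  -- outcomes at the R1-subprofile for the chain preferences
  have hmemxyz : ∀ t : X, t = x ∨ t = y ∨ t = z → t ∈ ({x, y, z} : Set X) := by
    intro t ht; simpa using ht
  have hf1_Pxyz : f (Function.update (Function.update R j R1) i Pxyz) = x := by
    refine htopf R1 hR1 hB1' Pxyz (hss.subset hPxyz) x (hmemxyz x (Or.inl rfl)) ?_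
    intro u hu hux
    simp only [Set.mem_insert_iff, Set.mem_singleton_iff] at hu
    rcases hu with rfl | rfl | rfl
    · exact absurd rfl hux
    · exact hPxyz1
    · exact hPxyz3
  have hf1_Pzxy : f (Function.update (Function.update R j R1) i Pzxy) = z := by
    refine htopf R1 hR1 hB1' Pzxy (hss.subset hPzxy) z (hmemxyz z (Or.inr (Or.inr rfl))) ?_
    intro u hu huz
    simp only [Set.mem_insert_iff, Set.mem_singleton_iff] at hu
    rcases hu with rfl | rfl | rfl
    · exact hPzxy1
    · exact hPzxy3
    · exact absurd rfl huz
  have hf1_Qyxz : f (Function.update (Function.update R j R1) i Qyxz) = y := by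
    refine htopf R1 hR1 hB1' Qyxz hQyxz y (hmemxyz y (Or.inr (Or.inl rfl))) ?_
    intro u hu huy
    simp only [Set.mem_insert_iff, Set.mem_singleton_iff] at hu
    rcases hu with rfl | rfl | rfl
    · exact hQyxz1
    · exact absurd rfl huy
    · exact hQyxz3
  have hf1_Qyzx : f (Function.update (Function.update R j R1) i Qyzx) = y := by
    refine htopf R1 hR1 hB1' Qyzx hQyzx y (hmemxyz y (Or.inr (Or.inl rfl))) ?_
    intro u hu huy
    simp only [Set.mem_insert_iff, Set.mem_singleton_iff] at hu
    rcases hu with rfl | rfl | rfl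
    · exact hQyzx3
    · exact absurd rfl huy
    · exact hQyzx1
  have hf1_Qzyx : f (Function.update (Function.update R j R1) i Qzyx) = z := by
    refine htopf R1 hR1 hB1' Qzyx hQzyx z (hmemxyz z (Or.inr (Or.inr rfl))) ?_
    intro u hu huz
    simp only [Set.mem_insert_iff, Set.mem_singleton_iff] at hu
    rcases hu with rfl | rfl | rfl
    · exact hQzyx3
    · exact hQzyx1
    · exact absurd rfl huz
  -- Step 1: x remains in the option set over 𝓡' i at the R2-subprofile
  have hxA2 : f (Function.update (Function.update R j R2) i Pxyz) = x := by
    rcases hswap Pxyz (hss.subset hPxyz) with h | ⟨hv', hw'⟩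
    · rw [h, hf1_Pxyz]
    · exfalso
      have hvx : v = x := by rw [hf1_Pxyz] at hv'; exact hv'.symm
      have hw2 : w ∈ ({x, z} : Set X) := by
        rw [← hw']; exact hmem2 R2 hR2 Pxyz hPxyz
      have hwz : w = z := by
        simp only [Set.mem_insert_iff, Set.mem_singleton_iff] at hw2
        rcases hw2 with h | h
        · exact absurd (hvx.trans h.symm) hvw
        · exact h
      have hyB2 : f (Function.update (Function.update R j R2) i Qyxz) = y := by
        rcases hswap Qyxz hQyxz with h | ⟨hv2, _⟩
        · rw [h, hf1_Qyxz]
        · rw [hf1_Qyxz] at hv2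
          exact absurd (hv2.trans hvx) (Ne.symm hxy')
      have h := hmax R2 hR2 Pxyz (hss.subset hPxyz) y ⟨Qyxz, hQyxz, hyB2⟩
      rw [hw', hwz] at h
      exact h hPxyz2
  -- Step 2: z remains in the option set over 𝓡' i at the R2-subprofile
  have hzA2 : f (Function.update (Function.update R j R2) i Pzxy) = z := by
    rcases hswap Pzxy (hss.subset hPzxy) with h | ⟨hv', hw'⟩
    · rw [h, hf1_Pzxy]
    · exfalso
      have hvz : v = z := by rw [hf1_Pzxy] at hv'; exact hv'.symm
      have hw2 : w ∈ ({x, z} : Set X) := by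
        rw [← hw']; exact hmem2 R2 hR2 Pzxy hPzxy
      have hwx : w = x := by
        simp only [Set.mem_insert_iff, Set.mem_singleton_iff] at hw2
        rcases hw2 with h | h
        · exact h
        · exact absurd (hvz.trans h.symm) hvw
      have hznB2 : z ∉ optionSet f i (Function.update R j R2) (𝓡 i) := by
        intro hzB2
        have h := hmax R2 hR2 Pzxy (hss.subset hPzxy) z hzB2
        rw [hw', hwx] at h
        exact h hPzxy1
      have hyB2 : f (Function.update (Function.update R j R2) i Qyzx) = y := by
        rcases hswap Qyzx hQyzx with h | ⟨hv2, _⟩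
        · rw [h, hf1_Qyzx]
        · rw [hf1_Qyzx] at hv2
          exact absurd (hv2.trans hvz) (Ne.symm hzy)
      have hQzyxF2 : f (Function.update (Function.update R j R2) i Qzyx) = x := by
        rcases hswap Qzyx hQzyx with h | ⟨_, hw2'⟩
        · rw [hf1_Qzyx] at h
          exact absurd ⟨Qzyx, hQzyx, h⟩ hznB2
        · rw [hw2', hwx]
      have h := hmax R2 hR2 Qzyx hQzyx y ⟨Qyzx, hQyzx, hyB2⟩
      rw [hQzyxF2] at h
      exact h hQzyx2
  -- Step 3: y remains in the option set over 𝓡 i at the R2-subprofile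
  have hyB2 : y ∈ optionSet f i (Function.update R j R2) (𝓡 i) := by
    rcases hswap Qyxz hQyxz with h | ⟨hv1, hw1⟩
    · exact ⟨Qyxz, hQyxz, by rw [h, hf1_Qyxz]⟩
    · rcases hswap Qyzx hQyzx with h2 | ⟨hv2, hw2⟩
      · exact ⟨Qyzx, hQyzx, by rw [h2, hf1_Qyzx]⟩
      · exfalso
        have hvy : v = y := by rw [hf1_Qyxz] at hv1; exact hv1.symm
        have hwmem3 : w ∈ ({x, y, z} : Set X) := by
          rw [← hw1]; exact hmem3 R2 hR2 Qyxz hQyxz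
        simp only [Set.mem_insert_iff, Set.mem_singleton_iff] at hwmem3
        rcases hwmem3 with rfl | rfl | rfl
        · have h := hmax R2 hR2 Qyzx hQyzx z ⟨Pzxy, hss.subset hPzxy, hzA2⟩
          rw [hw2] at h
          exact h hQyzx2
        · exact hvw hvy
        · have h := hmax R2 hR2 Qyxz hQyxz x ⟨Pxyz, hss.subset hPxyz, hxA2⟩
          rw [hw1] at h
          exact h hQyxz2
  -- conclusion
  constructor
  · rw [hrange']
    apply Set.Subset.antisymm
    · rintro u ⟨P, hP, rfl⟩
      exact hmem2 R2 hR2 P hP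
    · intro u hu
      simp only [Set.mem_insert_iff, Set.mem_singleton_iff] at hu
      rcases hu with rfl | rfl
      · exact ⟨Pxyz, hPxyz, hxA2⟩
      · exact ⟨Pzxy, hPzxy, hzA2⟩
  · rw [hrange]
    apply Set.Subset.antisymm
    · rintro u ⟨P, hP, rfl⟩
      exact hmem3 R2 hR2 P hP
    · intro u hu
      simp only [Set.mem_insert_iff, Set.mem_singleton_iff] at hu
      rcases hu with rfl | rfl | rfl
      · exact ⟨Pxyz, hss.subset hPxyz, hxA2⟩
      · exact hyB2
      · exact ⟨Pzxy, hss.subset hPzxy, hzA2⟩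
end
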